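/- arXiv:1410.2202 — 11 statements merged into one kernel-verified Lean document; each statement's English description precedes it below -/
import Mathlib

section
/- Let p be a nonconstant polynomial with complex coefficients and let z₀ ∈ ℂ be a point with p(z₀) ≠ 0 and p'(z₀) ≠ 0. Then p has a root in the closed half-plane through z₀ whose outward normal is the complex number a = p(z₀)/p'(z₀); that is, there exists θ ∈ ℂ with p(θ) = 0 and Re( conj(a) · (θ − z₀) ) ≤ 0. -/
open Polynomial

/-- Logarithmic derivative of a product of linear factors. -/
lemma eval_derivative_multiset_prod_X_sub_C (t : Multiset ℂ) (z : ℂ)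
    (hz : ∀ r ∈ t, z - r ≠ 0) :
    Polynomial.eval z (Polynomial.derivative (t.map (fun a => X - C a)).prod) =
      Polynomial.eval z (t.map (fun a => X - C a)).prod *
        (t.map (fun r => (z - r)⁻¹)).sum := by
  induction t using Multiset.induction with
  | empty => simp
  | cons r s ih =>
    have hzr : z - r ≠ 0 := hz r (Multiset.mem_cons_self r s)
    have ih' := ih (fun x hx => hz x (Multiset.mem_cons_of_mem hx))
    simp only [Multiset.map_cons, Multiset.prod_cons, Multiset.sum_cons,
      Polynomial.derivative_mul, Polynomial.derivative_sub, Polynomial.derivative_X,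
      Polynomial.derivative_C, sub_zero, one_mul, Polynomial.eval_add,
      Polynomial.eval_mul, Polynomial.eval_sub, Polynomial.eval_X, Polynomial.eval_C, ih']
    field_simp

/-- Let `p` be a nonconstant complex polynomial and `z₀ ∈ ℂ` with
`p(z₀) ≠ 0` and `p'(z₀) ≠ 0`. Then `p` has a root in the closed half-plane through `z₀`
whose outward normal is `a = p(z₀)/p'(z₀)`: there is `θ` with `p(θ) = 0` and
`Re(conj a · (θ - z₀)) ≤ 0`. -/
theorem newton_halfplane_contains_root
    (p : Polynomial ℂ) (hp : 1 ≤ p.natDegree)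
    (z₀ : ℂ) (h0 : p.eval z₀ ≠ 0) (h1 : p.derivative.eval z₀ ≠ 0) :
    ∃ θ : ℂ, p.eval θ = 0 ∧
      ((starRingEnd ℂ) (p.eval z₀ / p.derivative.eval z₀) * (θ - z₀)).re ≤ 0 := by
  by_contra hcon
  push_neg at hcon
  set a : ℂ := p.eval z₀ / p.derivative.eval z₀ with ha
  -- every root lies strictly in the open half-plane on the wrong side
  have hroot : ∀ r ∈ p.roots, z₀ - r ≠ 0 ∧ 0 < ((starRingEnd ℂ) a * (r - z₀)).re := by
    intro r hr
    have hr0 : p.eval r = 0 :=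
      (Polynomial.mem_roots (p := p) (by
        intro h; rw [h] at h0; simp at h0)).mp hr
    refine ⟨?_, hcon r hr0⟩
    intro h
    have : z₀ = r := by linear_combination h
    rw [this] at h0; exact h0 hr0
  -- p splits over ℂ
  have hps : p = Polynomial.C p.leadingCoeff * (p.roots.map (fun a => X - C a)).prod :=
    (IsAlgClosed.splits p).eq_prod_roots
  set S : ℂ := (p.roots.map (fun r => (z₀ - r)⁻¹)).sum with hS
  have hkey : p.derivative.eval z₀ = p.eval z₀ * S := by
    conv_lhs => rw [hps]
    conv_rhs => rw [hps]
    rw [Polynomial.derivative_mul, Polynomial.derivative_C, zero_mul, zero_add,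
      Polynomial.eval_mul, Polynomial.eval_mul, Polynomial.eval_C,
      eval_derivative_multiset_prod_X_sub_C _ _ (fun r hr => (hroot r hr).1)]
    ring
  -- hence conj a * S has real part 1 (in fact a * S = ... use conj)
  have haS : (starRingEnd ℂ) a * (starRingEnd ℂ) S = 1 := by
    rw [← map_mul, ha]
    have : p.eval z₀ / p.derivative.eval z₀ * S = 1 := by
      rw [hkey] at h1 ⊢
      have hSne : S ≠ 0 := fun h => h1 (by rw [h, mul_zero])
      field_simp
    rw [this, map_one]
  -- but each term of conj a * conj S has nonpositive real part
  have hterm : ∀ r ∈ p.roots, ((starRingEnd ℂ) a * (starRingEnd ℂ) (z₀ - r)⁻¹).re ≤ 0 := by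
    intro r hr
    obtain ⟨hne, hpos⟩ := hroot r hr
    have hns : (0:ℝ) < Complex.normSq (z₀ - r) := by rwa [Complex.normSq_pos]
    have hexp : (starRingEnd ℂ) a * (starRingEnd ℂ) (z₀ - r)⁻¹ =
        (((Complex.normSq (z₀ - r))⁻¹ : ℝ) : ℂ) * -((starRingEnd ℂ) a * (r - z₀)) := by
      rw [map_inv₀, Complex.inv_def, Complex.normSq_conj, Complex.conj_conj,
        Complex.ofReal_inv]
      ring
    rw [hexp, Complex.re_ofReal_mul, Complex.neg_re]
    have h2 : (0:ℝ) ≤ (Complex.normSq (z₀ - r))⁻¹ := le_of_lt (inv_pos.mpr hns)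
    have := mul_nonpos_of_nonneg_of_nonpos h2
      (by linarith : -((starRingEnd ℂ) a * (r - z₀)).re ≤ 0)
    linarith
  -- sum up
  have hsum : ((starRingEnd ℂ) a * (starRingEnd ℂ) S).re ≤ 0 := by
    have heq : (starRingEnd ℂ) a * (starRingEnd ℂ) S =
        (p.roots.map (fun r => (starRingEnd ℂ) a * (starRingEnd ℂ) (z₀ - r)⁻¹)).sum := by
      rw [hS, map_multiset_sum, Multiset.map_map, ← Multiset.sum_map_mul_left]
      simp [Function.comp]
    rw [heq]
    rw [show ((Multiset.map (fun r => (starRingEnd ℂ) a * (starRingEnd ℂ) (z₀ - r)⁻¹)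
          p.roots).sum).re
        = (Multiset.map (fun r => ((starRingEnd ℂ) a * (starRingEnd ℂ) (z₀ - r)⁻¹).re)
          p.roots).sum from by
      rw [show (Multiset.map (fun r => ((starRingEnd ℂ) a * (starRingEnd ℂ) (z₀ - r)⁻¹).re)
            p.roots)
          = (Multiset.map (fun r => (starRingEnd ℂ) a * (starRingEnd ℂ) (z₀ - r)⁻¹)
            p.roots).map Complex.reAddGroupHom from by rw [Multiset.map_map]; rfl]
      exact map_multiset_sum Complex.reAddGroupHom _]
    have hneg : (0:ℝ) ≤ (Multiset.map
        (fun r => -(((starRingEnd ℂ) a * (starRingEnd ℂ) (z₀ - r)⁻¹).re)) p.roots).sum := by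
      refine Multiset.sum_nonneg ?_
      intro x hx
      obtain ⟨r, hr, rfl⟩ := Multiset.mem_map.mp hx
      have := hterm r hr
      linarith
    rw [show (Multiset.map
        (fun r => -(((starRingEnd ℂ) a * (starRingEnd ℂ) (z₀ - r)⁻¹).re)) p.roots)
      = Multiset.map Neg.neg (Multiset.map
        (fun r => ((starRingEnd ℂ) a * (starRingEnd ℂ) (z₀ - r)⁻¹).re) p.roots) from by
      rw [Multiset.map_map]; rfl, Multiset.sum_map_neg'] at hneg
    linarith
  rw [haS] at hsum
  rw [Complex.one_re] at hsum
  linarith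
end

section
/- Let p(z) = aₙzⁿ + ⋯ + a₁z + a₀ be a polynomial with complex coefficients, aₙ ≠ 0, n ≥ 1. Then every root θ of p satisfies |θ| ≤ 2 · max{ |a_{n−k+1}/aₙ|^{1/(k−1)} : k = 2, …, n+1 }. -/
lemma geom_half_aux : ∀ n : ℕ, (∑ i ∈ Finset.range n, (2:ℝ)⁻¹ ^ (n - i)) = 1 - 2⁻¹ ^ n := by
  intro n
  induction n with
  | zero => simp
  | succ n ih =>
    rw [Finset.sum_range_succ]
    have h1 : (∑ i ∈ Finset.range n, (2:ℝ)⁻¹ ^ (n + 1 - i))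
        = 2⁻¹ * ∑ i ∈ Finset.range n, (2:ℝ)⁻¹ ^ (n - i) := by
      rw [Finset.mul_sum]
      refine Finset.sum_congr rfl fun i hi => ?_
      have hi' : i < n := Finset.mem_range.mp hi
      have : n + 1 - i = (n - i) + 1 := by omega
      rw [this, pow_succ]
      ring
    have : n + 1 - n = 1 := by omega
    rw [this, h1, ih]
    ring

/-- Every root `θ` of `p(z) = aₙ zⁿ + ⋯ + a₀` (with `aₙ ≠ 0`, `n ≥ 1`)
satisfies `|θ| ≤ 2 · max { |a_{n-k+1}/aₙ|^{1/(k-1)} : k = 2, …, n+1 }`. -/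
theorem root_bound_m_two
    (n : ℕ) (hn : 1 ≤ n) (a : ℕ → ℂ) (han : a n ≠ 0)
    (θ : ℂ) (hθ : (∑ i ∈ Finset.range (n + 1), a i * θ ^ i) = 0) :
    ‖θ‖ ≤ 2 * (Finset.Icc 2 (n + 1)).sup' (Finset.nonempty_Icc.mpr (by omega))
      (fun k => ‖a (n + 1 - k) / a n‖ ^ (1 / ((k : ℝ) - 1))) := by
  set f : ℕ → ℝ := fun k => ‖a (n + 1 - k) / a n‖ ^ (1 / ((k : ℝ) - 1)) with hf
  set M : ℝ := (Finset.Icc 2 (n + 1)).sup' (Finset.nonempty_Icc.mpr (by omega)) f with hMdef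
  set r : ℝ := ‖θ‖ with hrdef
  by_contra hcon
  push_neg at hcon
  have hM0 : 0 ≤ M := by
    have h2 : (2 : ℕ) ∈ Finset.Icc 2 (n + 1) := by
      simp only [Finset.mem_Icc]; omega
    refine le_trans ?_ (Finset.le_sup' f h2)
    exact Real.rpow_nonneg (norm_nonneg _) _
  have hr0 : 0 < r := lt_of_le_of_lt (by positivity) hcon
  have hMr : M ≤ r / 2 := by linarith
  -- key estimate: |a i / a n| ≤ M ^ (n - i) for i < n
  have key : ∀ i, i < n → ‖a i / a n‖ ≤ M ^ (n - i) := by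
    intro i hi
    set k : ℕ := n + 1 - i with hk
    have hkmem : k ∈ Finset.Icc 2 (n + 1) := by
      simp only [Finset.mem_Icc]; omega
    have hfk : f k ≤ M := Finset.le_sup' f hkmem
    have hik : n + 1 - k = i := by omega
    set x : ℝ := ‖a i / a n‖ with hx
    have hx0 : 0 ≤ x := norm_nonneg _
    have hkcast : ((k : ℝ) - 1) = ((n - i : ℕ) : ℝ) := by
      have h1 : (k : ℝ) = ((n : ℝ) + 1 - (i : ℝ)) := by
        rw [hk]; push_cast [Nat.cast_sub (by omega : i ≤ n + 1)]; ring
      have h2 : ((n - i : ℕ) : ℝ) = (n : ℝ) - (i : ℝ) := by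
        push_cast [Nat.cast_sub (le_of_lt hi)]; ring
      rw [h1, h2]; ring
    set e : ℝ := ((n - i : ℕ) : ℝ) with he
    have he0 : 0 < e := by
      have : 1 ≤ n - i := by omega
      rw [he]; exact_mod_cast Nat.lt_of_lt_of_le Nat.zero_lt_one this
    have hfk' : x ^ (1 / e) ≤ M := by
      rw [hf] at hfk
      simp only [hik] at hfk
      rw [hkcast] at hfk
      exact hfk
    have hxeq : (x ^ (1 / e)) ^ e = x := by
      rw [← Real.rpow_mul hx0, one_div, inv_mul_cancel₀ (ne_of_gt he0), Real.rpow_one]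
    calc x = (x ^ (1 / e)) ^ e := hxeq.symm
      _ ≤ M ^ e := Real.rpow_le_rpow (Real.rpow_nonneg hx0 _) hfk' (le_of_lt he0)
      _ = M ^ (n - i) := Real.rpow_natCast M (n - i)
  -- From the root equation: |a n| * r^n ≤ ∑_{i<n} |a i| * r^i
  have hsum : ‖a n‖ * r ^ n ≤
      ∑ i ∈ Finset.range n, ‖a i‖ * r ^ i := by
    have heq : a n * θ ^ n = -∑ i ∈ Finset.range n, a i * θ ^ i := by
      rw [Finset.sum_range_succ] at hθ
      linear_combination hθ
    calc ‖a n‖ * r ^ n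
        = ‖a n * θ ^ n‖ := by
          rw [norm_mul, norm_pow]
      _ = ‖∑ i ∈ Finset.range n, a i * θ ^ i‖ := by rw [heq, norm_neg]
      _ ≤ ∑ i ∈ Finset.range n, ‖a i * θ ^ i‖ :=
          norm_sum_le _ _
      _ = ∑ i ∈ Finset.range n, ‖a i‖ * r ^ i := by
          refine Finset.sum_congr rfl fun i _ => ?_
          rw [norm_mul, norm_pow]
  have han0 : 0 < ‖a n‖ := norm_pos_iff.mpr han
  -- Divide through
  have hsum2 : r ^ n ≤ ∑ i ∈ Finset.range n, ‖a i / a n‖ * r ^ i := by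
    have : ∑ i ∈ Finset.range n, ‖a i / a n‖ * r ^ i
        = (∑ i ∈ Finset.range n, ‖a i‖ * r ^ i) / ‖a n‖ := by
      rw [Finset.sum_div]
      refine Finset.sum_congr rfl fun i _ => ?_
      rw [norm_div]; ring
    rw [this, le_div_iff₀ han0]
    calc r ^ n * ‖a n‖ = ‖a n‖ * r ^ n := by ring
      _ ≤ _ := hsum
  -- Bound the right-hand side
  have hbound : ∑ i ∈ Finset.range n, ‖a i / a n‖ * r ^ i
      ≤ r ^ n * (1 - 2⁻¹ ^ n) := by
    have step : ∑ i ∈ Finset.range n, ‖a i / a n‖ * r ^ i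
        ≤ ∑ i ∈ Finset.range n, r ^ n * 2⁻¹ ^ (n - i) := by
      refine Finset.sum_le_sum fun i hi => ?_
      have hi' : i < n := Finset.mem_range.mp hi
      have h1 : ‖a i / a n‖ ≤ M ^ (n - i) := key i hi'
      have h2 : M ^ (n - i) ≤ (r / 2) ^ (n - i) := pow_le_pow_left₀ hM0 hMr _
      have h3 : (r / 2) ^ (n - i) * r ^ i = r ^ n * 2⁻¹ ^ (n - i) := by
        rw [div_pow, div_eq_mul_inv, ← inv_pow]
        have : r ^ (n - i) * r ^ i = r ^ n := by
          rw [← pow_add]; congr 1; omega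
        calc r ^ (n - i) * (2:ℝ)⁻¹ ^ (n - i) * r ^ i
            = (r ^ (n - i) * r ^ i) * (2:ℝ)⁻¹ ^ (n - i) := by ring
          _ = r ^ n * 2⁻¹ ^ (n - i) := by rw [this]
      calc ‖a i / a n‖ * r ^ i
          ≤ (r / 2) ^ (n - i) * r ^ i := by
            apply mul_le_mul_of_nonneg_right (le_trans h1 h2) (by positivity)
        _ = r ^ n * 2⁻¹ ^ (n - i) := h3
    calc ∑ i ∈ Finset.range n, ‖a i / a n‖ * r ^ i
        ≤ ∑ i ∈ Finset.range n, r ^ n * 2⁻¹ ^ (n - i) := step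
      _ = r ^ n * ∑ i ∈ Finset.range n, (2:ℝ)⁻¹ ^ (n - i) := by
          rw [Finset.mul_sum]
      _ = r ^ n * (1 - 2⁻¹ ^ n) := by rw [geom_half_aux]
  have hlt : r ^ n * (1 - 2⁻¹ ^ n) < r ^ n := by
    have h1 : (0:ℝ) < 2⁻¹ ^ n := by positivity
    have h2 : (0:ℝ) < r ^ n := by positivity
    nlinarith
  linarith [le_trans hsum2 hbound]
end

section
/- Let p(z) = aₙzⁿ + ⋯ + a₁z + a₀ be a polynomial with complex coefficients, aₙ ≠ 0, n ≥ 1, and set a₋₁ = 0. Let r₃ = (√5 − 1)/2 be the unique positive root of t² + t − 1. Then every root θ of p satisfies |θ| ≤ (1/r₃) · max{ | (a_{n−1}·a_{n−k+2} − aₙ·a_{n−k+1}) / aₙ² |^{1/(k−1)} : k = 3, …, n+2 }. -/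
private lemma aux_id_rb (n : ℕ) (hn : 1 ≤ n) (a : ℤ → ℂ)
    (hneg : ∀ i : ℤ, i < 0 → a i = 0) (θ : ℂ)
    (hθ : (∑ i ∈ Finset.range (n + 1), a (i : ℤ) * θ ^ i) = 0) :
    (a n) ^ 2 * θ ^ (n + 1) =
      ∑ j ∈ Finset.range n,
        (a ((n : ℤ) - 1) * a (j : ℤ) - a (n : ℤ) * a ((j : ℤ) - 1)) * θ ^ j := by
  obtain ⟨m, rfl⟩ : ∃ m, n = m + 1 := ⟨n - 1, by omega⟩
  have e1 : ∑ j ∈ Finset.range (m + 2), a (j : ℤ) * θ ^ j = 0 := hθ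
  rw [Finset.sum_range_succ] at e1
  push_cast at e1
  have e2 : ∑ j ∈ Finset.range (m + 1), a (j : ℤ) * θ ^ j
      = -(a ((m : ℤ) + 1) * θ ^ (m + 1)) := by linear_combination e1
  have e2' := e2
  rw [Finset.sum_range_succ] at e2'
  have e3 : ∑ j ∈ Finset.range m, a (j : ℤ) * θ ^ j
      = -(a ((m : ℤ) + 1) * θ ^ (m + 1)) - a (m : ℤ) * θ ^ m := by
    linear_combination e2'
  have e4 : ∑ j ∈ Finset.range (m + 1), a ((j : ℤ) - 1) * θ ^ j
      = θ * ∑ j ∈ Finset.range m, a (j : ℤ) * θ ^ j := by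
    rw [Finset.sum_range_succ']
    rw [show a (((0 : ℕ) : ℤ) - 1) = 0 from hneg _ (by norm_num), zero_mul, add_zero,
      Finset.mul_sum]
    refine Finset.sum_congr rfl fun i _ => ?_
    have h : ((i : ℤ) + 1) - 1 = (i : ℤ) := by ring
    push_cast
    rw [h]
    ring
  push_cast
  rw [show ((m : ℤ) + 1 - 1) = (m : ℤ) from by ring]
  have split : ∑ j ∈ Finset.range (m + 1),
      (a (m : ℤ) * a (j : ℤ) - a ((m : ℤ) + 1) * a ((j : ℤ) - 1)) * θ ^ j
      = a (m : ℤ) * (∑ j ∈ Finset.range (m + 1), a (j : ℤ) * θ ^ j)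
        - a ((m : ℤ) + 1) * (∑ j ∈ Finset.range (m + 1), a ((j : ℤ) - 1) * θ ^ j) := by
    rw [Finset.mul_sum, Finset.mul_sum, ← Finset.sum_sub_distrib]
    exact Finset.sum_congr rfl fun j _ => by ring
  rw [split, e2, e4, e3]
  ring

/-- With coefficients indexed by `ℤ` (and vanishing for negative indices),
every root `θ` of `p(z) = aₙ zⁿ + ⋯ + a₀` (`aₙ ≠ 0`, `n ≥ 1`) satisfies
`|θ| ≤ (1/r₃) · max { |(a_{n-1} a_{n-k+2} - aₙ a_{n-k+1})/aₙ²|^{1/(k-1)} : k = 3, …, n+2 }`,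
where `r₃ = (√5 - 1)/2` is the unique positive root of `t² + t - 1`. -/
theorem root_bound_m_three
    (n : ℕ) (hn : 1 ≤ n) (a : ℤ → ℂ) (han : a n ≠ 0)
    (hneg : ∀ i : ℤ, i < 0 → a i = 0)
    (θ : ℂ) (hθ : (∑ i ∈ Finset.range (n + 1), a (i : ℤ) * θ ^ i) = 0) :
    ‖θ‖ ≤ (1 / ((Real.sqrt 5 - 1) / 2)) *
      (Finset.Icc 3 (n + 2)).sup' (Finset.nonempty_Icc.mpr (by omega))
        (fun k => ‖
          ((a ((n : ℤ) - 1) * a ((n : ℤ) - k + 2) - a n * a ((n : ℤ) - k + 1)) / (a n) ^ 2)‖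
            ^ (1 / ((k : ℝ) - 1))) := by
  have h5 : Real.sqrt 5 ^ 2 = 5 := Real.sq_sqrt (by norm_num)
  have hs5 : 1 < Real.sqrt 5 := by nlinarith [Real.sqrt_nonneg 5]
  set r : ℝ := (Real.sqrt 5 - 1) / 2 with hrdef
  have hr0 : 0 < r := by rw [hrdef]; linarith
  have hr1 : r < 1 := by rw [hrdef]; nlinarith [Real.sqrt_nonneg 5]
  have hrq : r ^ 2 = 1 - r := by rw [hrdef]; nlinarith
  have main : ∀ M : ℝ, 0 ≤ M →
      (∀ k ∈ Finset.Icc 3 (n + 2),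
        ‖
          ((a ((n : ℤ) - 1) * a ((n : ℤ) - k + 2) - a n * a ((n : ℤ) - k + 1)) / (a n) ^ 2)‖
            ^ (1 / ((k : ℝ) - 1)) ≤ M) →
      ‖θ‖ ≤ (1 / r) * M := by
    intro M hM0 hMb
    by_contra hcon
    push_neg at hcon
    have habs : 0 < ‖θ‖ := lt_of_le_of_lt (by positivity) hcon
    set t : ℝ := M / ‖θ‖ with htdef
    have ht0 : 0 ≤ t := div_nonneg hM0 habs.le
    have htr : t < r := by
      rw [htdef, div_lt_iff₀ habs]
      calc M = r * ((1 / r) * M) := by field_simp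
        _ < r * ‖θ‖ := mul_lt_mul_of_pos_left hcon hr0
    have hA : 0 < ‖(a n)‖ := norm_pos_iff.mpr han
    have hid := aux_id_rb n hn a hneg θ hθ
    have hstep2 : ‖(a n)‖ ^ 2 * ‖θ‖ ^ (n + 1)
        ≤ ∑ j ∈ Finset.range n,
            ‖(a ((n : ℤ) - 1) * a (j : ℤ) - a (n : ℤ) * a ((j : ℤ) - 1))‖
              * ‖θ‖ ^ j := by
      have h1 : ‖((a n) ^ 2 * θ ^ (n + 1))‖
          = ‖(a n)‖ ^ 2 * ‖θ‖ ^ (n + 1) := by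
        rw [norm_mul, norm_pow, norm_pow]
      rw [← h1, hid]
      refine le_trans (norm_sum_le _ _) (le_of_eq ?_)
      exact Finset.sum_congr rfl fun j _ => by rw [norm_mul, norm_pow]
    have hstep3 : ∀ j ∈ Finset.range n,
        ‖(a ((n : ℤ) - 1) * a (j : ℤ) - a (n : ℤ) * a ((j : ℤ) - 1))‖
          ≤ ‖(a n)‖ ^ 2 * M ^ (n + 1 - j) := by
      intro j hj
      rw [Finset.mem_range] at hj
      have hkmem : n + 2 - j ∈ Finset.Icc 3 (n + 2) := by
        rw [Finset.mem_Icc]; omega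
      have hb := hMb (n + 2 - j) hkmem
      have hcast1 : ((n : ℤ) - ((n + 2 - j : ℕ) : ℤ) + 2) = (j : ℤ) := by omega
      have hcast2 : ((n : ℤ) - ((n + 2 - j : ℕ) : ℤ) + 1) = (j : ℤ) - 1 := by omega
      rw [hcast1, hcast2] at hb
      have he : (0 : ℝ) < ((n + 2 - j : ℕ) : ℝ) - 1 := by
        have h3 : (3 : ℝ) ≤ ((n + 2 - j : ℕ) : ℝ) := by exact_mod_cast (by omega : 3 ≤ n + 2 - j)
        linarith
      have hxe : ‖
          ((a ((n : ℤ) - 1) * a (j : ℤ) - a (n : ℤ) * a ((j : ℤ) - 1)) / (a n) ^ 2)‖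
          ≤ M ^ (((n + 2 - j : ℕ) : ℝ) - 1) := by
        have hrec : ‖
            ((a ((n : ℤ) - 1) * a (j : ℤ) - a (n : ℤ) * a ((j : ℤ) - 1)) / (a n) ^ 2)‖
            = (‖
                ((a ((n : ℤ) - 1) * a (j : ℤ) - a (n : ℤ) * a ((j : ℤ) - 1)) / (a n) ^ 2)‖
              ^ (1 / (((n + 2 - j : ℕ) : ℝ) - 1))) ^ (((n + 2 - j : ℕ) : ℝ) - 1) := by
          rw [← Real.rpow_mul (norm_nonneg _), one_div_mul_cancel he.ne', Real.rpow_one]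
        rw [hrec]
        exact Real.rpow_le_rpow (Real.rpow_nonneg (norm_nonneg _) _) hb he.le
      have hnn : (n + 2 - j : ℕ) = (n + 1 - j) + 1 := by omega
      have hexp : (((n + 2 - j : ℕ) : ℝ) - 1) = ((n + 1 - j : ℕ) : ℝ) := by
        rw [hnn]; push_cast; ring
      rw [hexp, Real.rpow_natCast] at hxe
      rw [norm_div, norm_pow, div_le_iff₀ (by positivity)] at hxe
      exact hxe.trans_eq (mul_comm _ _)
    have hstep4 : ‖θ‖ ^ (n + 1)
        ≤ ∑ j ∈ Finset.range n, M ^ (n + 1 - j) * ‖θ‖ ^ j := by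
      have h1 : ∑ j ∈ Finset.range n,
            ‖(a ((n : ℤ) - 1) * a (j : ℤ) - a (n : ℤ) * a ((j : ℤ) - 1))‖
              * ‖θ‖ ^ j
          ≤ ∑ j ∈ Finset.range n,
              ‖(a n)‖ ^ 2 * M ^ (n + 1 - j) * ‖θ‖ ^ j :=
        Finset.sum_le_sum fun j hj => mul_le_mul_of_nonneg_right (hstep3 j hj) (by positivity)
      have h2 : ∑ j ∈ Finset.range n,
            ‖(a n)‖ ^ 2 * M ^ (n + 1 - j) * ‖θ‖ ^ j
          = ‖(a n)‖ ^ 2 * ∑ j ∈ Finset.range n, M ^ (n + 1 - j) * ‖θ‖ ^ j := by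
        rw [Finset.mul_sum]
        exact Finset.sum_congr rfl fun j _ => by ring
      have h3 := le_trans hstep2 (h1.trans h2.le)
      exact le_of_mul_le_mul_left h3 (by positivity)
    have hM_eq : M = t * ‖θ‖ := by rw [htdef]; field_simp
    have hstep5 : ‖θ‖ ^ (n + 1)
        ≤ (∑ j ∈ Finset.range n, t ^ (j + 2)) * ‖θ‖ ^ (n + 1) := by
      refine hstep4.trans (le_of_eq ?_)
      calc ∑ j ∈ Finset.range n, M ^ (n + 1 - j) * ‖θ‖ ^ j
          = ∑ j ∈ Finset.range n, t ^ (n - 1 - j + 2) * ‖θ‖ ^ (n + 1) := by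
            refine Finset.sum_congr rfl fun j hj => ?_
            rw [Finset.mem_range] at hj
            have h2 : (n + 1 - j) + j = n + 1 := by omega
            have h1 : n + 1 - j = n - 1 - j + 2 := by omega
            rw [hM_eq, mul_pow, mul_assoc, ← pow_add, h2, h1]
        _ = ∑ j ∈ Finset.range n, t ^ (j + 2) * ‖θ‖ ^ (n + 1) :=
            Finset.sum_range_reflect (fun j => t ^ (j + 2) * ‖θ‖ ^ (n + 1)) n
        _ = (∑ j ∈ Finset.range n, t ^ (j + 2)) * ‖θ‖ ^ (n + 1) :=
            (Finset.sum_mul _ _ _).symm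
    have hpow : 0 < ‖θ‖ ^ (n + 1) := pow_pos habs _
    have h1le : 1 ≤ ∑ j ∈ Finset.range n, t ^ (j + 2) :=
      le_of_mul_le_mul_right (by rw [one_mul]; exact hstep5) hpow
    have hgeom : (∑ j ∈ Finset.range n, t ^ j) * (1 - t) = 1 - t ^ n := by
      linear_combination -(geom_sum_mul t n)
    have hsplit : ∑ j ∈ Finset.range n, t ^ (j + 2) = t ^ 2 * ∑ j ∈ Finset.range n, t ^ j := by
      rw [Finset.mul_sum]
      exact Finset.sum_congr rfl fun j _ => by ring
    have htn : 0 ≤ t ^ n := pow_nonneg ht0 n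
    have ht1 : t < 1 := htr.trans hr1
    have h1t : 0 < 1 - t := by linarith
    have hfin : (1 : ℝ) - t ≤ t ^ 2 := by
      have h2 : (1 - t) * 1 ≤ (1 - t) * (t ^ 2 * ∑ j ∈ Finset.range n, t ^ j) := by
        apply mul_le_mul_of_nonneg_left _ h1t.le
        rw [← hsplit]; exact h1le
      have h3 : (1 - t) * (t ^ 2 * ∑ j ∈ Finset.range n, t ^ j) = t ^ 2 * (1 - t ^ n) := by
        linear_combination t ^ 2 * hgeom
      have h4 : t ^ 2 * (1 - t ^ n) ≤ t ^ 2 := by nlinarith [mul_nonneg (sq_nonneg t) htn]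
      calc (1 : ℝ) - t = (1 - t) * 1 := by ring
        _ ≤ (1 - t) * (t ^ 2 * ∑ j ∈ Finset.range n, t ^ j) := h2
        _ = t ^ 2 * (1 - t ^ n) := h3
        _ ≤ t ^ 2 := h4
    have ht2 : t ^ 2 < r ^ 2 := by nlinarith
    linarith [hrq, hfin, ht2, htr]
  have h3mem : (3 : ℕ) ∈ Finset.Icc 3 (n + 2) := Finset.mem_Icc.mpr ⟨le_refl 3, by omega⟩
  apply main
  · exact le_trans (Real.rpow_nonneg (norm_nonneg _) _)
      (Finset.le_sup' (fun (k : ℕ) => ‖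
          ((a ((n : ℤ) - 1) * a ((n : ℤ) - k + 2) - a n * a ((n : ℤ) - k + 1)) / (a n) ^ 2)‖
            ^ (1 / ((k : ℝ) - 1))) h3mem)
  · intro k hk
    exact Finset.le_sup' (fun (k : ℕ) => ‖
          ((a ((n : ℤ) - 1) * a ((n : ℤ) - k + 2) - a n * a ((n : ℤ) - k + 1)) / (a n) ^ 2)‖
            ^ (1 / ((k : ℝ) - 1))) hk
end

section
/- Let p(z) = aₙzⁿ + ⋯ + a₁z + a₀ be a polynomial with complex coefficients, aₙ ≠ 0, n ≥ 1, and set a₋₁ = a₋₂ = 0. Let r₄ be the unique positive root of t³ + t − 1. Then every root θ of p satisfies |θ| ≤ (1/r₄) · max{ | det M_k / aₙ³ |^{1/(k−1)} : k = 4, …, n+3 }, where M_k is the 3×3 matrix with rows (a_{n−1}, a_{n−2}, a_{n−k+1}), (aₙ, a_{n−1}, a_{n−k+2}), (0, aₙ, a_{n−k+3}). -/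
open Finset


/-- With coefficients indexed by `ℤ` (and vanishing for negative indices),
let `r₄` be the unique positive root of `t³ + t - 1`. Every root `θ` of
`p(z) = aₙ zⁿ + ⋯ + a₀` (`aₙ ≠ 0`, `n ≥ 1`) satisfies
`|θ| ≤ (1/r₄) · max { |det M_k / aₙ³|^{1/(k-1)} : k = 4, …, n+3 }`, where `M_k` is the
3×3 matrix with rows `(a_{n-1}, a_{n-2}, a_{n-k+1})`, `(aₙ, a_{n-1}, a_{n-k+2})`,
`(0, aₙ, a_{n-k+3})`. -/
theorem root_bound_m_four
    (n : ℕ) (hn : 1 ≤ n) (a : ℤ → ℂ) (han : a n ≠ 0)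
    (hneg : ∀ i : ℤ, i < 0 → a i = 0)
    (r₄ : ℝ) (hr₄pos : 0 < r₄) (hr₄ : r₄ ^ 3 + r₄ - 1 = 0)
    (θ : ℂ) (hθ : (∑ i ∈ Finset.range (n + 1), a (i : ℤ) * θ ^ i) = 0) :
    ‖θ‖ ≤ (1 / r₄) *
      (Finset.Icc 4 (n + 3)).sup' (Finset.nonempty_Icc.mpr (by omega))
        (fun k => ‖
          ((Matrix.det !![a ((n : ℤ) - 1), a ((n : ℤ) - 2), a ((n : ℤ) - k + 1);
                          a (n : ℤ),       a ((n : ℤ) - 1), a ((n : ℤ) - k + 2);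
                          0,               a (n : ℤ),       a ((n : ℤ) - k + 3)]) / (a n) ^ 3)‖
            ^ (1 / ((k : ℝ) - 1))) := by
  -- notation for the determinant expression
  set d : ℕ → ℂ := fun k =>
    (a n)^2 * a ((n:ℤ) - k + 1) - a n * a ((n:ℤ) - 1) * a ((n:ℤ) - k + 2)
      + (a ((n:ℤ) - 1)^2 - a n * a ((n:ℤ) - 2)) * a ((n:ℤ) - k + 3) with hd
  have hdet : ∀ k : ℕ,
      Matrix.det !![a ((n : ℤ) - 1), a ((n : ℤ) - 2), a ((n : ℤ) - k + 1);
                    a (n : ℤ),       a ((n : ℤ) - 1), a ((n : ℤ) - k + 2);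
                    0,               a (n : ℤ),       a ((n : ℤ) - k + 3)] = d k := by
    intro k
    simp [Matrix.det_fin_three, hd]
    ring
  simp only [hdet]
  set B := (Finset.Icc 4 (n + 3)).sup' (Finset.nonempty_Icc.mpr (by omega))
      (fun k => ‖d k / (a n) ^ 3‖ ^ (1 / ((k : ℝ) - 1))) with hB
  have h4mem : (4 : ℕ) ∈ Finset.Icc 4 (n+3) := Finset.mem_Icc.mpr (by omega)
  have hBnn : 0 ≤ B := by
    rw [hB]
    exact le_trans (Real.rpow_nonneg (norm_nonneg _) _)
      (Finset.le_sup' (fun k : ℕ => ‖d k / (a n) ^ 3‖ ^ (1 / ((k:ℝ) - 1))) h4mem)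
  -- trivial case θ = 0
  rcases eq_or_ne θ 0 with h0 | hθne
  · rw [h0]
    simp only [norm_zero]
    positivity
  -- the key algebraic identity
  have hA1 : ∑ j ∈ range (n+2), a ((j:ℤ) - 1) * θ^j = 0 := by
    rw [Finset.sum_range_succ']
    have e0 : a (((0:ℕ):ℤ) - 1) = 0 := hneg _ (by norm_num)
    rw [e0]
    have : ∀ j ∈ range (n+1), a (((j+1 : ℕ):ℤ) - 1) * θ^(j+1) = (a (j:ℤ) * θ^j) * θ := by
      intro j _
      have : ((j+1 : ℕ):ℤ) - 1 = (j:ℤ) := by push_cast; ring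
      rw [this, pow_succ]; ring
    rw [Finset.sum_congr rfl this, ← Finset.sum_mul, hθ]
    ring
  have hA2 : ∑ j ∈ range (n+3), a ((j:ℤ) - 2) * θ^j = 0 := by
    rw [Finset.sum_range_succ', Finset.sum_range_succ']
    have e0 : a (((0:ℕ):ℤ) - 2) = 0 := hneg _ (by norm_num)
    have e1 : a (((0+1:ℕ):ℤ) - 2) = 0 := hneg _ (by norm_num)
    rw [e0, e1]
    have : ∀ j ∈ range (n+1), a (((j+1+1 : ℕ):ℤ) - 2) * θ^(j+1+1) = (a (j:ℤ) * θ^j) * θ^2 := by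
      intro j _
      have : ((j+1+1 : ℕ):ℤ) - 2 = (j:ℤ) := by push_cast; ring
      rw [this]; ring
    rw [Finset.sum_congr rfl this, ← Finset.sum_mul, hθ]
    ring
  have hT0 : ∑ j ∈ range n, a (j:ℤ) * θ^j = -(a (n:ℤ) * θ^n) := by
    have := hθ
    rw [Finset.sum_range_succ] at this
    linear_combination this
  have hT1 : ∑ j ∈ range n, a ((j:ℤ) - 1) * θ^j
      = -(a ((n:ℤ)-1) * θ^n + a (n:ℤ) * θ^(n+1)) := by
    have := hA1
    rw [Finset.sum_range_succ, Finset.sum_range_succ] at this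
    have e1 : ((n+1 : ℕ):ℤ) - 1 = (n:ℤ) := by push_cast; ring
    have e2 : ((n : ℕ):ℤ) - 1 = (n:ℤ) - 1 := by push_cast; ring
    rw [e1, e2] at this
    linear_combination this
  have hT2 : ∑ j ∈ range n, a ((j:ℤ) - 2) * θ^j
      = -(a ((n:ℤ)-2) * θ^n + a ((n:ℤ)-1) * θ^(n+1) + a (n:ℤ) * θ^(n+2)) := by
    have := hA2
    rw [Finset.sum_range_succ, Finset.sum_range_succ, Finset.sum_range_succ] at this
    have e1 : ((n+2 : ℕ):ℤ) - 2 = (n:ℤ) := by push_cast; ring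
    have e2 : ((n+1 : ℕ):ℤ) - 2 = (n:ℤ) - 1 := by push_cast; ring
    have e3 : ((n : ℕ):ℤ) - 2 = (n:ℤ) - 2 := by push_cast; ring
    rw [e1, e2, e3] at this
    linear_combination this
  have hsum : ∑ k ∈ Icc 4 (n+3), d k * θ^(n+3-k)
      = ∑ j ∈ range n, ((a n)^2 * a ((j:ℤ) - 2)
          - a n * a ((n:ℤ)-1) * a ((j:ℤ) - 1)
          + (a ((n:ℤ)-1)^2 - a n * a ((n:ℤ)-2)) * a (j:ℤ)) * θ^j := by
    rw [← Finset.Ico_add_one_right_eq_Icc, Finset.sum_Ico_eq_sum_range,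
      show n + 3 + 1 - 4 = n from by omega,
      ← Finset.sum_range_reflect
        (fun j => ((a n)^2 * a ((j:ℤ) - 2)
          - a n * a ((n:ℤ)-1) * a ((j:ℤ) - 1)
          + (a ((n:ℤ)-1)^2 - a n * a ((n:ℤ)-2)) * a (j:ℤ)) * θ^j) n]
    refine Finset.sum_congr rfl fun i hi => ?_
    have hi' : i < n := mem_range.mp hi
    have e1 : (n:ℤ) - ((4+i : ℕ):ℤ) + 1 = ((n-1-i : ℕ):ℤ) - 2 := by omega
    have e2 : (n:ℤ) - ((4+i : ℕ):ℤ) + 2 = ((n-1-i : ℕ):ℤ) - 1 := by omega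
    have e3 : (n:ℤ) - ((4+i : ℕ):ℤ) + 3 = ((n-1-i : ℕ):ℤ) := by omega
    have e4 : n + 3 - (4+i) = n - 1 - i := by omega
    rw [hd]
    simp only [e1, e2, e3, e4]
  have key : (a (n:ℤ))^3 * θ^(n+2) + ∑ k ∈ Icc 4 (n+3), d k * θ^(n+3-k) = 0 := by
    rw [hsum]
    have hsplit : ∑ j ∈ range n, ((a n)^2 * a ((j:ℤ) - 2)
          - a n * a ((n:ℤ)-1) * a ((j:ℤ) - 1)
          + (a ((n:ℤ)-1)^2 - a n * a ((n:ℤ)-2)) * a (j:ℤ)) * θ^j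
        = (a n)^2 * (∑ j ∈ range n, a ((j:ℤ) - 2) * θ^j)
          - a n * a ((n:ℤ)-1) * (∑ j ∈ range n, a ((j:ℤ) - 1) * θ^j)
          + (a ((n:ℤ)-1)^2 - a n * a ((n:ℤ)-2)) * (∑ j ∈ range n, a (j:ℤ) * θ^j) := by
      simp only [Finset.mul_sum]
      rw [← Finset.sum_sub_distrib, ← Finset.sum_add_distrib]
      exact Finset.sum_congr rfl fun j _ => by ring
    rw [hsplit, hT0, hT1, hT2]
    ring
  -- now the analytic estimate
  by_contra hcon
  push_neg at hcon
  have hr₄1 : r₄ < 1 := by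
    by_contra hge
    push_neg at hge
    nlinarith [pow_le_pow_left₀ (by norm_num : (0:ℝ) ≤ 1) hge 3]
  have hTpos : 0 < ‖θ‖ := norm_pos_iff.mpr hθne
  have hBrT : B ≤ r₄ * ‖θ‖ := by
    have : B / r₄ < ‖θ‖ := by
      rw [div_eq_inv_mul, ← one_div]; exact hcon
    nlinarith [(div_lt_iff₀ hr₄pos).mp this]
  have han3 : ‖a (n:ℤ)‖ ^ 3 > 0 := pow_pos (norm_pos_iff.mpr han) 3
  -- per-term bound
  have hterm : ∀ k ∈ Icc 4 (n+3),
      ‖d k * θ^(n+3-k)‖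
        ≤ ‖a (n:ℤ)‖^3 * ‖θ‖ ^(n+2) * r₄^(k-1) := by
    intro k hk
    obtain ⟨hk4, hkn⟩ := Finset.mem_Icc.mp hk
    have hkR : (0:ℝ) < (k:ℝ) - 1 := by
      have : (4:ℝ) ≤ (k:ℝ) := by exact_mod_cast hk4
      linarith
    have hx : (0:ℝ) ≤ ‖d k / (a n)^3‖ := norm_nonneg _
    have hles : ‖d k / (a n)^3‖ ^ (1 / ((k:ℝ) - 1)) ≤ B :=
      Finset.le_sup' (fun k => ‖d k / (a n) ^ 3‖ ^ (1 / ((k : ℝ) - 1))) hk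
    have h2 : ‖d k / (a n)^3‖ ≤ B ^ ((k:ℝ) - 1) := by
      have := Real.rpow_le_rpow (Real.rpow_nonneg hx _) hles (le_of_lt hkR)
      rwa [← Real.rpow_mul hx, one_div, inv_mul_cancel₀ (ne_of_gt hkR), Real.rpow_one] at this
    have hcast : ((k-1 : ℕ):ℝ) = (k:ℝ) - 1 := by
      rw [Nat.cast_sub (by omega : 1 ≤ k), Nat.cast_one]
    have h3 : ‖d k / (a n)^3‖ ≤ B ^ (k-1) := by
      rwa [← hcast, Real.rpow_natCast] at h2
    have h4 : ‖d k‖ ≤ ‖a (n:ℤ)‖^3 * B ^ (k-1) := by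
      have hrw : d k = (a n)^3 * (d k / (a n)^3) := by
        field_simp
      calc ‖d k‖ = ‖(a n)^3 * (d k / (a n)^3)‖ := by rw [← hrw]
        _ = ‖a (n:ℤ)‖^3 * ‖d k / (a n)^3‖ := by
            rw [norm_mul, norm_pow]
        _ ≤ ‖a (n:ℤ)‖^3 * B ^ (k-1) := by
            exact mul_le_mul_of_nonneg_left h3 (by positivity)
    have h5 : B ^ (k-1) ≤ (r₄ * ‖θ‖) ^ (k-1) := pow_le_pow_left₀ hBnn hBrT _
    have hpow : ‖θ‖ ^ (k-1) * ‖θ‖ ^ (n+3-k) = ‖θ‖ ^ (n+2) := by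
      rw [← pow_add]
      congr 1
      omega
    calc ‖d k * θ^(n+3-k)‖
        = ‖d k‖ * ‖θ‖ ^ (n+3-k) := by rw [norm_mul, norm_pow]
      _ ≤ (‖a (n:ℤ)‖^3 * (r₄ * ‖θ‖) ^ (k-1)) * ‖θ‖ ^ (n+3-k) := by
          refine mul_le_mul_of_nonneg_right (h4.trans ?_) (by positivity)
          exact mul_le_mul_of_nonneg_left h5 (by positivity)
      _ = ‖a (n:ℤ)‖^3 * ‖θ‖ ^(n+2) * r₄^(k-1) := by
          rw [mul_pow]
          rw [show ‖a (n:ℤ)‖^3 * (r₄ ^ (k-1) * ‖θ‖ ^ (k-1)) * ‖θ‖ ^ (n+3-k)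
            = ‖a (n:ℤ)‖^3 * (‖θ‖ ^ (k-1) * ‖θ‖ ^ (n+3-k)) * r₄^(k-1) from by ring, hpow]
  -- geometric sum bound
  have hgeo : ∑ k ∈ Icc 4 (n+3), r₄ ^ (k-1) < 1 := by
    rw [← Finset.Ico_add_one_right_eq_Icc, Finset.sum_Ico_eq_sum_range,
      show n + 3 + 1 - 4 = n from by omega]
    have : ∀ i ∈ range n, r₄ ^ (4 + i - 1) = r₄ ^ 3 * r₄ ^ i := by
      intro i _
      rw [show 4 + i - 1 = 3 + i from by omega, pow_add]
    rw [Finset.sum_congr rfl this, ← Finset.mul_sum,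
      geom_sum_eq (ne_of_lt hr₄1) n]
    have hr3 : r₄ ^ 3 = 1 - r₄ := by linarith
    have hpn : 0 < r₄ ^ n := pow_pos hr₄pos n
    rw [hr3]
    have hne : r₄ - 1 ≠ 0 := by intro h; simp only [sub_eq_zero] at h; exact (ne_of_lt hr₄1) h
    have : (1 - r₄) * ((r₄ ^ n - 1) / (r₄ - 1)) = 1 - r₄ ^ n := by
      field_simp
      ring
    rw [this]
    linarith
  -- combine
  have hchain : ‖a (n:ℤ)‖^3 * ‖θ‖ ^ (n+2)
      ≤ (‖a (n:ℤ)‖^3 * ‖θ‖ ^(n+2)) * ∑ k ∈ Icc 4 (n+3), r₄^(k-1) := by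
    have heq : (a (n:ℤ))^3 * θ^(n+2) = -(∑ k ∈ Icc 4 (n+3), d k * θ^(n+3-k)) := by
      linear_combination key
    calc ‖a (n:ℤ)‖^3 * ‖θ‖ ^ (n+2)
        = ‖(a (n:ℤ))^3 * θ^(n+2)‖ := by rw [norm_mul, norm_pow, norm_pow]
      _ = ‖∑ k ∈ Icc 4 (n+3), d k * θ^(n+3-k)‖ := by
          rw [heq, norm_neg]
      _ ≤ ∑ k ∈ Icc 4 (n+3), ‖d k * θ^(n+3-k)‖ :=
          norm_sum_le _ _
      _ ≤ ∑ k ∈ Icc 4 (n+3), ‖a (n:ℤ)‖^3 * ‖θ‖ ^(n+2) * r₄^(k-1) :=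
          Finset.sum_le_sum hterm
      _ = (‖a (n:ℤ)‖^3 * ‖θ‖ ^(n+2)) * ∑ k ∈ Icc 4 (n+3), r₄^(k-1) := by
          rw [Finset.mul_sum]
    
  have hXpos : 0 < ‖a (n:ℤ)‖^3 * ‖θ‖ ^ (n+2) := by positivity
  nlinarith [mul_lt_mul_of_pos_left hgeo hXpos]
end

section
/- Let k ≥ 2, let B be a k×k real symmetric positive definite matrix, c ∈ ℝ^k, and a ∈ ℝ^k with a ≠ 0. Define B' = (k²/(k²−1))·( B − 2(Ba)(Ba)ᵀ/((k+1)·aᵀBa) ) and c' = c − Ba/((k+1)·√(aᵀBa)). Then the half-ellipsoid E(B,c) ∩ { x ∈ ℝ^k : aᵀ(x − c) ≤ 0 } is contained in the ellipsoid E(B',c'). -/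
open Matrix

private lemma mul_vmv {k : ℕ} (M : Matrix (Fin k) (Fin k) ℝ) (u v : Fin k → ℝ) :
    M * vecMulVec u v = vecMulVec (M *ᵥ u) v := by
  ext i j
  simp [mul_apply, vecMulVec_apply, mulVec, dotProduct, Finset.sum_mul, mul_assoc]

private lemma vmv_mul {k : ℕ} (M : Matrix (Fin k) (Fin k) ℝ) (u v : Fin k → ℝ) :
    vecMulVec u v * M = vecMulVec u (v ᵥ* M) := by
  ext i j
  simp [mul_apply, vecMulVec_apply, vecMul, dotProduct, Finset.mul_sum, mul_assoc]

private lemma vmv_mulVec {k : ℕ} (u v z : Fin k → ℝ) :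
    (vecMulVec u v) *ᵥ z = (v ⬝ᵥ z) • u := by
  ext i
  simp only [vecMulVec_apply, mulVec, dotProduct, Pi.smul_apply, smul_eq_mul,
    Finset.sum_mul, Finset.mul_sum]
  exact Finset.sum_congr rfl fun x _ => by ring

private lemma vmv_smul {k : ℕ} (u v : Fin k → ℝ) (r : ℝ) :
    vecMulVec u (r • v) = r • vecMulVec u v := by
  ext i j; simp [vecMulVec_apply, mul_comm, mul_assoc, mul_left_comm]

set_option maxHeartbeats 1000000 in
/-- The ellipsoid-method update: the half-ellipsoid
`E(B,c) ∩ {x : aᵀ(x-c) ≤ 0}` is contained in the updated ellipsoid `E(B',c')`. -/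
theorem half_ellipsoid_subset_updated_ellipsoid
    (k : ℕ) (hk : 2 ≤ k)
    (B : Matrix (Fin k) (Fin k) ℝ) (hB : B.PosDef)
    (c a : Fin k → ℝ) (ha : a ≠ 0)
    (B' : Matrix (Fin k) (Fin k) ℝ)
    (hB' : B' = ((k : ℝ) ^ 2 / ((k : ℝ) ^ 2 - 1)) •
      (B - (2 / (((k : ℝ) + 1) * (a ⬝ᵥ B.mulVec a))) • vecMulVec (B.mulVec a) (B.mulVec a)))
    (c' : Fin k → ℝ)
    (hc' : c' = c - (((k : ℝ) + 1) * Real.sqrt (a ⬝ᵥ B.mulVec a))⁻¹ • B.mulVec a) :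
    ∀ x : Fin k → ℝ,
      (x - c) ⬝ᵥ B⁻¹.mulVec (x - c) ≤ 1 → a ⬝ᵥ (x - c) ≤ 0 →
      (x - c') ⬝ᵥ B'⁻¹.mulVec (x - c') ≤ 1 := by
  set K : ℝ := (k : ℝ) with hK
  have hK2 : (2 : ℝ) ≤ K := by rw [hK]; exact_mod_cast hk
  have hK1 : (0 : ℝ) < K - 1 := by linarith
  have hKp1 : (0 : ℝ) < K + 1 := by linarith
  have hKsq : (0 : ℝ) < K ^ 2 - 1 := by nlinarith
  have hKsq' : (0 : ℝ) < K ^ 2 := by nlinarith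
  set b : Fin k → ℝ := B *ᵥ a with hbdef
  set s : ℝ := a ⬝ᵥ b with hs_def
  have hs : 0 < s := by simpa [star_trivial, hs_def, hbdef] using hB.dotProduct_mulVec_pos ha
  have hs0 : s ≠ 0 := ne_of_gt hs
  set r : ℝ := Real.sqrt s with hr_def
  have hr : 0 < r := Real.sqrt_pos.2 hs
  have hr2 : r ^ 2 = s := Real.sq_sqrt hs.le
  -- invertibility of B
  have hdet : IsUnit B.det := isUnit_iff_ne_zero.2 hB.det_pos.ne'
  have hBBinv : B * B⁻¹ = 1 := Matrix.mul_nonsing_inv B hdet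
  have hBinvB : B⁻¹ * B = 1 := Matrix.nonsing_inv_mul B hdet
  have hBinvb : B⁻¹ *ᵥ b = a := by
    rw [hbdef, Matrix.mulVec_mulVec, hBinvB, Matrix.one_mulVec]
  -- symmetry of B⁻¹
  have hsymm : B⁻¹ᵀ = B⁻¹ := by
    have h := hB.inv.isHermitian
    simpa [Matrix.IsHermitian, Matrix.conjTranspose_eq_transpose_of_trivial] using h
  have hvecMulb : b ᵥ* B⁻¹ = a := by
    rw [← hsymm, Matrix.vecMul_transpose]; exact hBinvb
  -- scalar abbreviations
  set σ : ℝ := K ^ 2 / (K ^ 2 - 1) with hσ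
  set τ : ℝ := 2 / ((K + 1) * s) with hτ
  set ρ : ℝ := 2 / ((K - 1) * s) with hρ
  have hσ0 : σ ≠ 0 := by positivity
  -- the explicit inverse of B'
  set M : Matrix (Fin k) (Fin k) ℝ := σ⁻¹ • (B⁻¹ + ρ • vecMulVec a a) with hM
  have hvv : b ᵥ* vecMulVec a a = s • a := by
    ext j
    simp only [vecMul, vecMulVec_apply, dotProduct, Pi.smul_apply, smul_eq_mul,
      Finset.sum_mul]
    rw [hs_def, dotProduct_comm]
    simp only [dotProduct, Finset.sum_mul]
    exact Finset.sum_congr rfl fun i _ => by ring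
  have hB'M : B' * M = 1 := by
    rw [hB', hM]
    rw [Matrix.smul_mul, Matrix.mul_smul, smul_smul]
    have hcoef : K ^ 2 / (K ^ 2 - 1) * σ⁻¹ = 1 := by
      rw [hσ]; field_simp
    rw [hcoef, one_smul]
    rw [Matrix.sub_mul, Matrix.smul_mul]
    rw [Matrix.mul_add, Matrix.mul_smul, Matrix.mul_add, Matrix.mul_smul]
    rw [hBBinv, mul_vmv, ← hbdef, vmv_mul, hvecMulb, vmv_mul, hvv, vmv_smul]
    have hzero : ρ - τ - τ * (ρ * s) = 0 := by
      rw [hρ, hτ]; field_simp; ring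
    have : (1 : Matrix (Fin k) (Fin k) ℝ) + ρ • vecMulVec b a -
        τ • (vecMulVec b a + ρ • s • vecMulVec b a) = 1
          + (ρ - τ - τ * (ρ * s)) • vecMulVec b a := by
      module
    rw [this, hzero, zero_smul, add_zero]
  have hinv : B'⁻¹ = M := Matrix.inv_eq_right_inv hB'M
  intro x hx hax
  set y : Fin k → ℝ := x - c with hy
  set q : ℝ := y ⬝ᵥ B⁻¹ *ᵥ y with hq_def
  set t : ℝ := a ⬝ᵥ y with ht_def
  have ht : t ≤ 0 := hax
  have hq1 : q ≤ 1 := hx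
  have hya : y ⬝ᵥ a = t := by rw [ht_def, dotProduct_comm]
  have hba : b ⬝ᵥ a = s := by rw [hs_def, dotProduct_comm]
  have hyb : y ⬝ᵥ B⁻¹ *ᵥ b = t := by rw [hBinvb, hya]
  have hby : b ⬝ᵥ B⁻¹ *ᵥ y = t := by rw [Matrix.dotProduct_mulVec, hvecMulb, ht_def]
  have hbb : b ⬝ᵥ B⁻¹ *ᵥ b = s := by rw [hBinvb, hba]
  -- Cauchy-Schwarz via positive semidefiniteness of B⁻¹
  have hcs : t * t ≤ s * q := by
    have hz := hB.inv.posSemidef.dotProduct_mulVec_nonneg (s • y - t • b)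
    simp only [star_trivial, Matrix.mulVec_sub, Matrix.mulVec_smul, dotProduct_sub,
      sub_dotProduct, smul_dotProduct, dotProduct_smul, smul_eq_mul] at hz
    rw [← hq_def, hyb, hby, hbb] at hz
    nlinarith [hz]
  have hxc' : x - c' = y + ((K + 1) * r)⁻¹ • b := by
    rw [hc', hy]; abel
  rw [hinv, hxc', hM]
  set β : ℝ := ((K + 1) * r)⁻¹ with hβ
  simp only [smul_mulVec, Matrix.add_mulVec, Matrix.mulVec_add, Matrix.mulVec_smul,
    vmv_mulVec, dotProduct_add, add_dotProduct, dotProduct_smul, smul_dotProduct,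
    smul_eq_mul, smul_smul]
  rw [← hq_def, hby, hya, hba, hyb, hbb, ← ht_def, ← hs_def]
  have htr : 0 ≤ t + r := by nlinarith [hcs, hq1, hr, hr2, hs]
  have key : σ⁻¹ * (q + β * t + ρ * t * (t + β * s)) +
      β * σ⁻¹ * (t + β * s + ρ * s * (t + β * s)) - 1 =
      ((K ^ 2 - 1) / K ^ 2) * (q - 1) + (2 * (K + 1) / (K ^ 2 * r ^ 2)) * (t * (t + r)) := by
    rw [hσ, hρ, hβ, ← hr2]
    field_simp
    ring
  have h1 : (K ^ 2 - 1) / K ^ 2 * (q - 1) ≤ 0 :=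
    mul_nonpos_of_nonneg_of_nonpos (by positivity) (by linarith)
  have h2 : 2 * (K + 1) / (K ^ 2 * r ^ 2) * (t * (t + r)) ≤ 0 :=
    mul_nonpos_of_nonneg_of_nonpos (by positivity)
      (mul_nonpos_of_nonpos_of_nonneg ht htr)
  linarith [key, h1, h2]
end

section
/- Let k ≥ 2, let B be a k×k real symmetric positive definite matrix and a ∈ ℝ^k with a ≠ 0. Then the matrix B' = (k²/(k²−1))·( B − 2(Ba)(Ba)ᵀ/((k+1)·aᵀBa) ) is symmetric positive definite. -/
open Matrix

lemma dot_vecMulVec_mulVec {k : ℕ} (u x : Fin k → ℝ) :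
    x ⬝ᵥ (vecMulVec u u).mulVec x = (x ⬝ᵥ u) * (x ⬝ᵥ u) := by
  simp only [dotProduct, mulVec, vecMulVec_apply, dotProduct, Finset.mul_sum,
    Finset.sum_mul]
  rw [Finset.sum_comm]
  congr 1; ext i; congr 1; ext j; ring

lemma symm_dot {k : ℕ} (B : Matrix (Fin k) (Fin k) ℝ) (hB : Bᵀ = B)
    (x y : Fin k → ℝ) : y ⬝ᵥ B.mulVec x = x ⬝ᵥ B.mulVec y := by
  rw [dotProduct_mulVec, ← mulVec_transpose, hB, dotProduct_comm]

/-- The updated matrix of the ellipsoid method,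
`B' = (k²/(k²-1))·(B - 2(Ba)(Ba)ᵀ/((k+1)·aᵀBa))`, is symmetric positive definite. -/
theorem updated_ellipsoid_matrix_posDef
    (k : ℕ) (hk : 2 ≤ k)
    (B : Matrix (Fin k) (Fin k) ℝ) (hB : B.PosDef)
    (a : Fin k → ℝ) (ha : a ≠ 0) :
    (((k : ℝ) ^ 2 / ((k : ℝ) ^ 2 - 1)) •
      (B - (2 / (((k : ℝ) + 1) * (a ⬝ᵥ B.mulVec a))) •
        vecMulVec (B.mulVec a) (B.mulVec a))).PosDef := by
  have hBsymm : Bᵀ = B := hB.1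
  have hk2 : (2 : ℝ) ≤ (k : ℝ) := by exact_mod_cast hk
  have hq : 0 < a ⬝ᵥ B.mulVec a := by simpa using hB.dotProduct_mulVec_pos ha
  set u := B.mulVec a with hu
  set q := a ⬝ᵥ u with hqdef
  set c : ℝ := (k : ℝ) ^ 2 / ((k : ℝ) ^ 2 - 1) with hc
  have hcpos : 0 < c := by
    apply div_pos <;> nlinarith
  refine posDef_iff_dotProduct_mulVec.mpr ⟨?_, ?_⟩
  · -- Hermitian
    ext i j
    simp only [conjTranspose_apply, Matrix.smul_apply, Matrix.sub_apply, vecMulVec_apply,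
      smul_eq_mul, star_trivial]
    have hBij : B j i = B i j := by
      conv_lhs => rw [← hBsymm]
      rfl
    rw [hBij]; ring
  · intro x hx
    have hp : 0 < x ⬝ᵥ B.mulVec x := by simpa using hB.dotProduct_mulVec_pos hx
    set s := x ⬝ᵥ u with hs
    -- Cauchy–Schwarz via discriminant
    have hcs : s ^ 2 ≤ (x ⬝ᵥ B.mulVec x) * q := by
      have hnn : ∀ t : ℝ, 0 ≤ q * (t * t) + (2 * s) * t + x ⬝ᵥ B.mulVec x := by
        intro t
        have h0 := hB.posSemidef.dotProduct_mulVec_nonneg (x + t • a)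
        have hsym : a ⬝ᵥ B.mulVec x = s := by
          rw [hs, hu]; exact symm_dot B hBsymm x a
        simp only [star_trivial, RCLike.ofReal_re] at h0
        calc (0:ℝ) ≤ (x + t • a) ⬝ᵥ B.mulVec (x + t • a) := by simpa using h0
          _ = q * (t * t) + (2 * s) * t + x ⬝ᵥ B.mulVec x := by
              simp only [mulVec_add, mulVec_smul, dotProduct_add, add_dotProduct,
                smul_dotProduct, dotProduct_smul, smul_eq_mul, hqdef, hs, hu, hsym]
              ring
      have := discrim_le_zero hnn
      rw [discrim] at this
      nlinarith
    have key : x ⬝ᵥ (((c : ℝ) •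
        (B - (2 / (((k : ℝ) + 1) * q)) • vecMulVec u u)).mulVec x)
        = c * ((x ⬝ᵥ B.mulVec x) - (2 / (((k : ℝ) + 1) * q)) * s ^ 2) := by
      rw [smul_mulVec, dotProduct_smul, sub_mulVec, smul_mulVec,
        dotProduct_sub, dotProduct_smul, dot_vecMulVec_mulVec]
      simp only [smul_eq_mul, hs]
      ring
    simp only [star_trivial]
    rw [key]
    have h2 : 2 / (((k : ℝ) + 1) * q) * s ^ 2 ≤ 2 / ((k : ℝ) + 1) * (x ⬝ᵥ B.mulVec x) := by
      rw [div_mul_eq_mul_div, div_le_iff₀ (by positivity)]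
      have : (2:ℝ) / ((k : ℝ) + 1) * (x ⬝ᵥ B.mulVec x) * (((k : ℝ) + 1) * q)
          = 2 * ((x ⬝ᵥ B.mulVec x) * q) := by
        field_simp
      rw [this]
      nlinarith
    have h3 : (2:ℝ) / ((k : ℝ) + 1) < 1 := by
      rw [div_lt_one (by linarith)]; linarith
    have : 0 < (x ⬝ᵥ B.mulVec x) - 2 / (((k : ℝ) + 1) * q) * s ^ 2 := by
      nlinarith
    positivity
end

section
/- Let k ≥ 2, let B be a k×k real symmetric positive definite matrix, c ∈ ℝ^k, and a ∈ ℝ^k with a ≠ 0. Define B' = (k²/(k²−1))·( B − 2(Ba)(Ba)ᵀ/((k+1)·aᵀBa) ) and c' = c − Ba/((k+1)·√(aᵀBa)). Then the Lebesgue volume of the ellipsoid E(B',c') is at most exp(−1/(2(k+1))) times the Lebesgue volume of E(B,c). -/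
open Matrix MeasureTheory

section AuxEllipsoid

variable {k : ℕ}

lemma psd_det_nonneg (S : Matrix (Fin k) (Fin k) ℝ) (hS : S.PosSemidef) : 0 ≤ S.det := by
  rw [hS.1.det_eq_prod_eigenvalues]
  exact Finset.prod_nonneg fun i _ => hS.eigenvalues_nonneg i

lemma volume_ellipsoid (k : ℕ) (B : Matrix (Fin k) (Fin k) ℝ) (hB : B.PosDef) (c : Fin k → ℝ) :
    volume {x : Fin k → ℝ | (x - c) ⬝ᵥ B⁻¹.mulVec (x - c) ≤ 1} =
      ENNReal.ofReal (Real.sqrt B.det) * volume {x : Fin k → ℝ | x ⬝ᵥ x ≤ 1} := by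
  classical
  open scoped MatrixOrder in
  set S := CFC.sqrt B with hSdef
  have hSpsd : S.PosSemidef := by open scoped MatrixOrder in exact (CFC.sqrt_nonneg B).posSemidef
  have hSS : S * S = B := by open scoped MatrixOrder in exact CFC.sqrt_mul_sqrt_self B hB.posSemidef.nonneg
  have hSsymm : Sᵀ = S := by
    rw [← conjTranspose_eq_transpose_of_trivial]; exact hSpsd.1
  have hdet_nonneg : 0 ≤ S.det := psd_det_nonneg S hSpsd
  have hdet_sq : S.det * S.det = B.det := by rw [← det_mul, hSS]
  have hdetB : 0 < B.det := hB.det_pos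
  have hdetS_pos : 0 < S.det := by
    rcases hdet_nonneg.lt_or_eq with h | h
    · exact h
    · exfalso; rw [← h] at hdet_sq; nlinarith
  have hdetS : S.det = Real.sqrt B.det := by
    rw [← hdet_sq, Real.sqrt_mul_self hdet_nonneg]
  have hU : IsUnit S.det := isUnit_iff_ne_zero.2 hdetS_pos.ne'
  have hSinv : S⁻¹ * S = 1 := nonsing_inv_mul S hU
  have hSinv' : S * S⁻¹ = 1 := mul_nonsing_inv S hU
  have hBinv : B⁻¹ = S⁻¹ * S⁻¹ := by rw [← hSS, Matrix.mul_inv_rev]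
  have hSinvsymm : S⁻¹ᵀ = S⁻¹ := by rw [transpose_nonsing_inv, hSsymm]
  -- key algebraic identity
  have key : ∀ w : Fin k → ℝ, (S *ᵥ w) ⬝ᵥ B⁻¹ *ᵥ (S *ᵥ w) = w ⬝ᵥ w := by
    intro w
    rw [hBinv, mulVec_mulVec, Matrix.mul_assoc, hSinv, Matrix.mul_one, dotProduct_mulVec]
    have : (S *ᵥ w) ᵥ* S⁻¹ = w := by
      rw [← hSinvsymm, vecMul_transpose, mulVec_mulVec, hSinv, one_mulVec]
    rw [this]
  -- set equality
  have hset : {x : Fin k → ℝ | (x - c) ⬝ᵥ B⁻¹.mulVec (x - c) ≤ 1}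
      = (fun x => S *ᵥ x + c) '' {x : Fin k → ℝ | x ⬝ᵥ x ≤ 1} := by
    ext y
    simp only [Set.mem_setOf_eq, Set.mem_image]
    constructor
    · intro hy
      refine ⟨S⁻¹ *ᵥ (y - c), ?_, ?_⟩
      · have h1 : S *ᵥ (S⁻¹ *ᵥ (y - c)) = y - c := by
          rw [mulVec_mulVec, hSinv', one_mulVec]
        have := key (S⁻¹ *ᵥ (y - c))
        rw [h1] at this
        rw [← this]
        exact hy
      · rw [mulVec_mulVec, hSinv', one_mulVec]; abel
    · rintro ⟨x, hx, rfl⟩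
      have h1 : S *ᵥ x + c - c = S *ᵥ x := by abel
      rw [h1, key]
      exact hx
  rw [hset]
  have hcomp : (fun x : Fin k → ℝ => S *ᵥ x + c) = (fun y => y + c) ∘ (Matrix.toLin' S) := by
    funext x; simp [Matrix.toLin'_apply]
  rw [hcomp, Set.image_comp, Set.image_add_right, measure_preimage_add_right,
    Measure.addHaar_image_linearMap, LinearMap.det_toLin', hdetS, abs_of_pos (hdetS ▸ hdetS_pos)]

lemma exists_symm_sqrt (B : Matrix (Fin k) (Fin k) ℝ) (hB : B.PosDef) :
    ∃ S : Matrix (Fin k) (Fin k) ℝ, S * S = B ∧ Sᵀ = S := by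
  classical
  open scoped MatrixOrder in
  refine ⟨CFC.sqrt B, CFC.sqrt_mul_sqrt_self B hB.posSemidef.nonneg, ?_⟩
  rw [← conjTranspose_eq_transpose_of_trivial]
  open scoped MatrixOrder in
  exact (CFC.sqrt_nonneg B).posSemidef.1

lemma dot_sq_form (B S : Matrix (Fin k) (Fin k) ℝ) (hSS : S * S = B) (hSsymm : Sᵀ = S)
    (v w : Fin k → ℝ) : v ⬝ᵥ B *ᵥ w = (S *ᵥ v) ⬝ᵥ (S *ᵥ w) := by
  rw [← hSS, ← mulVec_mulVec, dotProduct_mulVec, ← mulVec_transpose, hSsymm]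

lemma cauchy_form (B : Matrix (Fin k) (Fin k) ℝ) (hB : B.PosDef) (v w : Fin k → ℝ) :
    (v ⬝ᵥ B *ᵥ w) ^ 2 ≤ (v ⬝ᵥ B *ᵥ v) * (w ⬝ᵥ B *ᵥ w) := by
  obtain ⟨S, hSS, hSsymm⟩ := exists_symm_sqrt B hB
  rw [dot_sq_form B S hSS hSsymm v w, dot_sq_form B S hSS hSsymm v v,
    dot_sq_form B S hSS hSsymm w w]
  have := Finset.sum_mul_sq_le_sq_mul_sq Finset.univ (S *ᵥ v) (S *ᵥ w)
  simpa [dotProduct, pow_two] using this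

lemma vecMulVec_mulVec' (u v x : Fin k → ℝ) :
    vecMulVec u v *ᵥ x = (v ⬝ᵥ x) • u := by
  ext i
  simp [mulVec, vecMulVec_apply, dotProduct, Finset.mul_sum, mul_comm, mul_assoc,
    smul_eq_mul, mul_left_comm]

lemma vecMulVec_transpose' (u v : Fin k → ℝ) :
    (vecMulVec u v)ᵀ = vecMulVec v u := by
  ext i j
  simp [vecMulVec_apply, mul_comm]

lemma ratio_bound (k : ℕ) (hk : 2 ≤ k) :
    ((k:ℝ)^2/((k:ℝ)^2-1))^k * (1 - 2/((k:ℝ)+1)) ≤ Real.exp (-1/((k:ℝ)+1)) := by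
  have hK : (2:ℝ) ≤ (k:ℝ) := by exact_mod_cast hk
  have h1 : (0:ℝ) < (k:ℝ) + 1 := by linarith
  have h2 : (0:ℝ) < (k:ℝ)^2 - 1 := by nlinarith
  have h3 : (0:ℝ) < (k:ℝ) - 1 := by linarith
  set K : ℝ := (k:ℝ) with hKdef
  set lam : ℝ := K^2/(K^2-1) with hlam
  have hlampos : 0 < lam := by positivity
  have hk1 : 1 ≤ k := le_trans (by norm_num) hk
  have hsplit : lam ^ k * (1 - 2/(K+1)) = lam ^ (k-1) * (K/(K+1))^2 := by
    have : lam ^ k = lam ^ (k-1) * lam := by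
      rw [← pow_succ, Nat.sub_add_cancel hk1]
    rw [this, mul_assoc]
    congr 1
    rw [hlam]
    field_simp
    ring
  rw [hsplit]
  have hb1 : lam ≤ Real.exp (1/(K^2-1)) := by
    have := Real.add_one_le_exp (1/(K^2-1))
    have hlameq : lam = 1/(K^2-1) + 1 := by rw [hlam]; field_simp; ring
    linarith
  have hb2 : lam ^ (k-1) ≤ Real.exp (1/(K+1)) := by
    calc lam ^ (k-1) ≤ Real.exp (1/(K^2-1)) ^ (k-1) :=
          pow_le_pow_left₀ hlampos.le hb1 _
      _ = Real.exp (((k-1 : ℕ):ℝ) * (1/(K^2-1))) := by rw [Real.exp_nat_mul]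
      _ = Real.exp (1/(K+1)) := by
          congr 1
          have : ((k-1 : ℕ):ℝ) = K - 1 := by
            rw [Nat.cast_sub hk1]; norm_num; rfl
          rw [this]
          field_simp
          ring
  have hb3 : (K/(K+1))^2 ≤ Real.exp (-1/(K+1)) ^ 2 := by
    apply pow_le_pow_left₀ (by positivity)
    have h4 := Real.add_one_le_exp (-1/(K+1))
    have heq : K/(K+1) = -1/(K+1) + 1 := by field_simp; ring
    linarith
  calc lam ^ (k-1) * (K/(K+1))^2 ≤ Real.exp (1/(K+1)) * Real.exp (-1/(K+1)) ^ 2 := by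
        apply mul_le_mul hb2 hb3 (by positivity) (Real.exp_nonneg _)
    _ = Real.exp (-1/(K+1)) := by
        rw [pow_two, ← Real.exp_add, ← Real.exp_add]
        congr 1
        field_simp
        ring

end AuxEllipsoid

/-- The volume of the updated ellipsoid `E(B',c')` of the ellipsoid method
is at most `exp(-1/(2(k+1)))` times the volume of `E(B,c)`. -/
theorem updated_ellipsoid_volume_ratio
    (k : ℕ) (hk : 2 ≤ k)
    (B : Matrix (Fin k) (Fin k) ℝ) (hB : B.PosDef)
    (c a : Fin k → ℝ) (ha : a ≠ 0)
    (B' : Matrix (Fin k) (Fin k) ℝ)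
    (hB' : B' = ((k : ℝ) ^ 2 / ((k : ℝ) ^ 2 - 1)) •
      (B - (2 / (((k : ℝ) + 1) * (a ⬝ᵥ B.mulVec a))) • vecMulVec (B.mulVec a) (B.mulVec a)))
    (c' : Fin k → ℝ)
    (hc' : c' = c - (((k : ℝ) + 1) * Real.sqrt (a ⬝ᵥ B.mulVec a))⁻¹ • B.mulVec a) :
    volume {x : Fin k → ℝ | (x - c') ⬝ᵥ B'⁻¹.mulVec (x - c') ≤ 1} ≤
      ENNReal.ofReal (Real.exp (-1 / (2 * ((k : ℝ) + 1)))) *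
        volume {x : Fin k → ℝ | (x - c) ⬝ᵥ B⁻¹.mulVec (x - c) ≤ 1} := by
  have hK : (2:ℝ) ≤ (k:ℝ) := by exact_mod_cast hk
  have h1 : (0:ℝ) < (k:ℝ) + 1 := by linarith
  have h2 : (0:ℝ) < (k:ℝ)^2 - 1 := by nlinarith
  set K : ℝ := (k:ℝ) with hKdef
  set lam : ℝ := K^2/(K^2-1) with hlam
  have hlampos : 0 < lam := by positivity
  set u : Fin k → ℝ := B *ᵥ a with hu
  have hBsymm : Bᵀ = B := by
    rw [← conjTranspose_eq_transpose_of_trivial]; exact hB.1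
  have hα : 0 < a ⬝ᵥ B *ᵥ a := by
    have := hB.dotProduct_mulVec_pos ha
    simpa using this
  set α : ℝ := a ⬝ᵥ B *ᵥ a with hαdef
  set t : ℝ := 2 / ((K + 1) * α) with ht
  have htpos : 0 < t := by positivity
  have htα : t * α = 2 / (K + 1) := by
    rw [ht]; field_simp
  have hux : ∀ x : Fin k → ℝ, u ⬝ᵥ x = a ⬝ᵥ B *ᵥ x := by
    intro x
    rw [hu, dotProduct_mulVec, ← mulVec_transpose, hBsymm]
  -- positivity of B'
  have hBp' : B'.PosDef := by
    rw [posDef_iff_dotProduct_mulVec]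
    constructor
    · rw [IsHermitian, conjTranspose_eq_transpose_of_trivial, hB', transpose_smul,
        transpose_sub, transpose_smul, vecMulVec_transpose', hBsymm]
    · intro x hx
      have hxBx : 0 < x ⬝ᵥ B *ᵥ x := by simpa using hB.dotProduct_mulVec_pos hx
      have hCS : (a ⬝ᵥ B *ᵥ x) ^ 2 ≤ α * (x ⬝ᵥ B *ᵥ x) := cauchy_form B hB a x
      have hcalc : star x ⬝ᵥ B' *ᵥ x = lam * (x ⬝ᵥ B *ᵥ x - t * (a ⬝ᵥ B *ᵥ x)^2) := by
        rw [hB', smul_mulVec, dotProduct_smul, sub_mulVec, smul_mulVec,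
          vecMulVec_mulVec', dotProduct_sub, dotProduct_smul, dotProduct_smul, hux x]
        simp only [star_trivial, smul_eq_mul]
        have : x ⬝ᵥ u = a ⬝ᵥ B *ᵥ x := by rw [dotProduct_comm, hux x]
        rw [this]
        ring
      rw [hcalc]
      have h5 : t * (a ⬝ᵥ B *ᵥ x)^2 ≤ t * (α * (x ⬝ᵥ B *ᵥ x)) :=
        mul_le_mul_of_nonneg_left hCS htpos.le
      have h6 : t * (α * (x ⬝ᵥ B *ᵥ x)) = (2/(K+1)) * (x ⬝ᵥ B *ᵥ x) := by
        rw [← mul_assoc, htα]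
      have h7 : (2:ℝ)/(K+1) < 1 := by
        rw [div_lt_one h1]; linarith
      have h8 : t * (a ⬝ᵥ B *ᵥ x)^2 < x ⬝ᵥ B *ᵥ x := by
        calc t * (a ⬝ᵥ B *ᵥ x)^2 ≤ (2/(K+1)) * (x ⬝ᵥ B *ᵥ x) := by rw [← h6]; exact h5
          _ < 1 * (x ⬝ᵥ B *ᵥ x) := mul_lt_mul_of_pos_right h7 hxBx
          _ = x ⬝ᵥ B *ᵥ x := one_mul _
      exact mul_pos hlampos (by linarith)
  -- determinant of B'
  have hdetB' : B'.det = lam ^ k * ((1 - 2/(K+1)) * B.det) := by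
    have hUdet : IsUnit B.det := isUnit_iff_ne_zero.2 hB.det_pos.ne'
    have hBinvsymm : B⁻¹ᵀ = B⁻¹ := by rw [transpose_nonsing_inv, hBsymm]
    have hBinvu : u ᵥ* B⁻¹ = a := by
      rw [← hBinvsymm, vecMul_transpose, hu, mulVec_mulVec, nonsing_inv_mul B hUdet,
        one_mulVec]
    have hrw : B - t • vecMulVec u u = B + replicateCol Unit ((-t) • u) * replicateRow Unit u := by
      rw [vecMulVec_eq Unit, replicateCol_smul, Matrix.smul_mul, sub_eq_add_neg, ← neg_smul]
    have := det_add_replicateCol_mul_replicateRow (ι := Unit) hUdet ((-t) • u) u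
    rw [hB', det_smul, Fintype.card_fin]
    rw [hrw, this, Matrix.det_unique ((1 + replicateRow Unit u * B⁻¹ * replicateCol Unit ((-t) • u) : Matrix Unit Unit ℝ))]
    have hentry : ((1 + replicateRow Unit u * B⁻¹ * replicateCol Unit ((-t) • u) : Matrix Unit Unit ℝ)) default default
        = 1 - t * α := by
      rw [Matrix.add_apply, Matrix.one_apply_eq, ← replicateRow_vecMul, hBinvu, replicateRow_mul_replicateCol_apply,
        dotProduct_smul, smul_eq_mul]
      have : a ⬝ᵥ u = α := rfl
      rw [this]
      ring
    rw [hentry, htα]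
    ring
  -- volumes
  rw [volume_ellipsoid k B' hBp' c', volume_ellipsoid k B hB c]
  have hfac_nonneg : 0 ≤ lam ^ k * (1 - 2/(K+1)) := by
    have : (2:ℝ)/(K+1) ≤ 1 := by
      rw [div_le_one h1]; linarith
    have := sub_nonneg.2 this
    positivity
  have hsqrt : Real.sqrt B'.det
      = Real.sqrt (lam ^ k * (1 - 2/(K+1))) * Real.sqrt B.det := by
    rw [hdetB', ← mul_assoc, Real.sqrt_mul hfac_nonneg]
  have hle : Real.sqrt (lam ^ k * (1 - 2/(K+1))) ≤ Real.exp (-1 / (2 * (K + 1))) := by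
    have hrb := ratio_bound k hk
    calc Real.sqrt (lam ^ k * (1 - 2/(K+1)))
        ≤ Real.sqrt (Real.exp (-1/(K+1))) := Real.sqrt_le_sqrt hrb
      _ = Real.exp (-1 / (2 * (K + 1))) := by
          have : Real.exp (-1/(K+1)) = Real.exp (-1 / (2 * (K + 1))) ^ 2 := by
            rw [pow_two, ← Real.exp_add]
            congr 1
            field_simp
            ring
          rw [this, Real.sqrt_sq (Real.exp_nonneg _)]
  calc ENNReal.ofReal (Real.sqrt B'.det) * volume {x : Fin k → ℝ | x ⬝ᵥ x ≤ 1}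
      ≤ ENNReal.ofReal (Real.exp (-1 / (2 * (K + 1))) * Real.sqrt B.det)
          * volume {x : Fin k → ℝ | x ⬝ᵥ x ≤ 1} := by
        apply mul_le_mul_left
        apply ENNReal.ofReal_le_ofReal
        rw [hsqrt]
        exact mul_le_mul_of_nonneg_right hle (Real.sqrt_nonneg _)
    _ = ENNReal.ofReal (Real.exp (-1 / (2 * (K + 1)))) *
          (ENNReal.ofReal (Real.sqrt B.det) * volume {x : Fin k → ℝ | x ⬝ᵥ x ≤ 1}) := by
        rw [ENNReal.ofReal_mul (Real.exp_nonneg _), mul_assoc]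
end

section
/- Let k ≥ 2. Suppose (B_j, c_j), j = 0, 1, 2, …, is a sequence where B₀ is a k×k real symmetric positive definite matrix, c₀ ∈ ℝ^k, and for each j there is a nonzero vector a_j ∈ ℝ^k such that B_{j+1} = (k²/(k²−1))·( B_j − 2(B_j a_j)(B_j a_j)ᵀ/((k+1)·a_jᵀB_j a_j) ) and c_{j+1} = c_j − B_j a_j/((k+1)·√(a_jᵀB_j a_j)). Then for every N, the Lebesgue volume of E(B_N, c_N) is at most exp(−N/(2(k+1))) times the volume of E(B₀, c₀); in particular the volumes of the ellipsoids E(B_j, c_j) tend to zero. -/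
open Matrix MeasureTheory

variable {k : ℕ}

lemma EM_symm_dot (M : Matrix (Fin k) (Fin k) ℝ) (hM : M.IsHermitian) (x a : Fin k → ℝ) :
    x ⬝ᵥ M.mulVec a = a ⬝ᵥ M.mulVec x := by
  rw [dotProduct_mulVec, ← mulVec_transpose,
    show Mᵀ = M from (Matrix.conjTranspose_eq_transpose_of_trivial M).symm.trans hM.eq,
    dotProduct_comm]

lemma EM_dot_pos (M : Matrix (Fin k) (Fin k) ℝ) (hM : M.PosDef) {x : Fin k → ℝ} (hx : x ≠ 0) :
    0 < x ⬝ᵥ M.mulVec x := by simpa using hM.dotProduct_mulVec_pos hx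

lemma EM_dot_nonneg (M : Matrix (Fin k) (Fin k) ℝ) (hM : M.PosSemidef) (x : Fin k → ℝ) :
    0 ≤ x ⬝ᵥ M.mulVec x := by simpa using hM.dotProduct_mulVec_nonneg x


lemma EM_dot_vmv (u v x y : Fin k → ℝ) :
    x ⬝ᵥ (vecMulVec u v).mulVec y = (x ⬝ᵥ u) * (v ⬝ᵥ y) := by
  simp only [vecMulVec, mulVec, dotProduct, of_apply, Finset.mul_sum, Finset.sum_mul]
  rw [Finset.sum_comm]
  congr 1; ext i; congr 1; ext j; ring

lemma EM_cs (M : Matrix (Fin k) (Fin k) ℝ) (hM : M.PosDef) (x a : Fin k → ℝ) (ha : a ≠ 0) :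
    (x ⬝ᵥ M.mulVec a) ^ 2 ≤ (x ⬝ᵥ M.mulVec x) * (a ⬝ᵥ M.mulVec a) := by
  have hα : 0 < a ⬝ᵥ M.mulVec a := EM_dot_pos M hM ha
  set α : ℝ := a ⬝ᵥ M.mulVec a
  set β : ℝ := x ⬝ᵥ M.mulVec a
  have h0 : 0 ≤ (α • x - β • a) ⬝ᵥ M.mulVec (α • x - β • a) := EM_dot_nonneg M hM.posSemidef _
  have hexp : (α • x - β • a) ⬝ᵥ M.mulVec (α • x - β • a)
      = α ^ 2 * (x ⬝ᵥ M.mulVec x) - 2 * α * β * β + β ^ 2 * α := by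
    simp only [mulVec_sub, mulVec_smul, dotProduct_sub, sub_dotProduct, dotProduct_smul,
      smul_dotProduct, smul_eq_mul, EM_symm_dot M hM.1 a x]
    ring
  rw [hexp] at h0
  nlinarith [h0, hα]

lemma EM_mul_vecMulVec (M : Matrix (Fin k) (Fin k) ℝ) (u v : Fin k → ℝ) :
    M * vecMulVec u v = vecMulVec (M.mulVec u) v := by
  ext i j
  simp only [Matrix.mul_apply, vecMulVec_apply, mulVec, dotProduct, Finset.sum_mul]
  exact Finset.sum_congr rfl fun l _ => by ring

lemma EM_smul_vecMulVec (s : ℝ) (u v : Fin k → ℝ) :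
    s • vecMulVec u v = vecMulVec (s • u) v := by
  ext i j; simp [vecMulVec_apply, mul_assoc]

lemma EM_transpose_vecMulVec (u : Fin k → ℝ) :
    (vecMulVec u u)ᵀ = vecMulVec u u := by
  ext i j; simp [vecMulVec_apply, mul_comm]

lemma EM_det_key (M : Matrix (Fin k) (Fin k) ℝ) (hM : M.PosDef) (a : Fin k → ℝ) (s : ℝ) :
    (M - s • vecMulVec (M.mulVec a) (M.mulVec a)).det
      = (1 - s * (a ⬝ᵥ M.mulVec a)) * M.det := by
  have h1 : M - s • vecMulVec (M.mulVec a) (M.mulVec a)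
      = M * (1 - s • vecMulVec a (M.mulVec a)) := by
    rw [Matrix.mul_sub, Matrix.mul_one, Matrix.mul_smul, EM_mul_vecMulVec]
  rw [h1, det_mul]
  have h2 : (1 : Matrix (Fin k) (Fin k) ℝ) - s • vecMulVec a (M.mulVec a)
      = 1 + replicateCol Unit ((-s) • a) * replicateRow Unit (M.mulVec a) := by
    rw [← vecMulVec_eq Unit, ← EM_smul_vecMulVec, neg_smul, ← sub_eq_add_neg]
  rw [h2, det_one_add_replicateCol_mul_replicateRow]
  have h3 : M.mulVec a ⬝ᵥ (-s) • a = -s * (a ⬝ᵥ M.mulVec a) := by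
    rw [dotProduct_smul, dotProduct_comm]; simp [mul_comm]
  rw [h3]; ring

lemma EM_step_posDef (hk : 2 ≤ k) (M : Matrix (Fin k) (Fin k) ℝ) (hM : M.PosDef)
    (a : Fin k → ℝ) (ha : a ≠ 0) :
    (((k : ℝ) ^ 2 / ((k : ℝ) ^ 2 - 1)) •
      (M - (2 / (((k : ℝ) + 1) * (a ⬝ᵥ M.mulVec a))) •
        vecMulVec (M.mulVec a) (M.mulVec a))).PosDef := by
  have hk2 : (2 : ℝ) ≤ (k : ℝ) := by exact_mod_cast hk
  have hα : 0 < a ⬝ᵥ M.mulVec a := EM_dot_pos M hM ha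
  set α : ℝ := a ⬝ᵥ M.mulVec a with hαdef
  set s : ℝ := 2 / (((k : ℝ) + 1) * α) with hsdef
  set r : ℝ := (k : ℝ) ^ 2 / ((k : ℝ) ^ 2 - 1) with hrdef
  have hden : (0 : ℝ) < (k : ℝ) ^ 2 - 1 := by nlinarith
  have hr : 0 < r := by positivity
  have hs : 0 < s := by positivity
  refine PosDef.of_dotProduct_mulVec_pos ?_ ?_
  · show _ = _
    rw [conjTranspose_eq_transpose_of_trivial, transpose_smul, transpose_sub, transpose_smul,
      EM_transpose_vecMulVec, show Mᵀ = M from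
        (Matrix.conjTranspose_eq_transpose_of_trivial M).symm.trans hM.1.eq]
  · intro x hx
    have hq : 0 < x ⬝ᵥ M.mulVec x := EM_dot_pos M hM hx
    have hcs := EM_cs M hM x a ha
    have hexp : x ⬝ᵥ (r • (M - s • vecMulVec (M.mulVec a) (M.mulVec a))).mulVec x
        = r * (x ⬝ᵥ M.mulVec x - s * (x ⬝ᵥ M.mulVec a) ^ 2) := by
      rw [smul_mulVec, dotProduct_smul, sub_mulVec, smul_mulVec, dotProduct_sub,
        dotProduct_smul, EM_dot_vmv]
      have : x ⬝ᵥ M.mulVec a = M.mulVec a ⬝ᵥ x := dotProduct_comm _ _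
      simp only [smul_eq_mul]
      rw [← this]; ring
    have key : 0 < x ⬝ᵥ M.mulVec x - s * (x ⬝ᵥ M.mulVec a) ^ 2 := by
      have h1 : s * (x ⬝ᵥ M.mulVec a) ^ 2 ≤ s * ((x ⬝ᵥ M.mulVec x) * α) :=
        mul_le_mul_of_nonneg_left hcs hs.le
      have h2 : s * ((x ⬝ᵥ M.mulVec x) * α) = 2 * (x ⬝ᵥ M.mulVec x) / ((k : ℝ) + 1) := by
        rw [hsdef]; field_simp
      have h3 : 2 * (x ⬝ᵥ M.mulVec x) / ((k : ℝ) + 1) < x ⬝ᵥ M.mulVec x := by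
        rw [div_lt_iff₀ (by linarith)]; nlinarith
      linarith
    have : (0:ℝ) < r * (x ⬝ᵥ M.mulVec x - s * (x ⬝ᵥ M.mulVec a) ^ 2) := mul_pos hr key
    simpa [hexp] using this

lemma EM_step_det (hk : 2 ≤ k) (M : Matrix (Fin k) (Fin k) ℝ) (hM : M.PosDef)
    (a : Fin k → ℝ) (ha : a ≠ 0) :
    (((k : ℝ) ^ 2 / ((k : ℝ) ^ 2 - 1)) •
      (M - (2 / (((k : ℝ) + 1) * (a ⬝ᵥ M.mulVec a))) •
        vecMulVec (M.mulVec a) (M.mulVec a))).det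
      = (((k : ℝ) ^ 2 / ((k : ℝ) ^ 2 - 1)) ^ k * (((k : ℝ) - 1) / ((k : ℝ) + 1))) * M.det := by
  have hk2 : (2 : ℝ) ≤ (k : ℝ) := by exact_mod_cast hk
  have hα : 0 < a ⬝ᵥ M.mulVec a := EM_dot_pos M hM ha
  rw [det_smul, EM_det_key M hM, Fintype.card_fin]
  have : 1 - 2 / (((k : ℝ) + 1) * (a ⬝ᵥ M.mulVec a)) * (a ⬝ᵥ M.mulVec a)
      = ((k : ℝ) - 1) / ((k : ℝ) + 1) := by
    field_simp
    ring
  rw [this]; ring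



open scoped MatrixOrder in
lemma EM_sqrt_facts (M : Matrix (Fin k) (Fin k) ℝ) (hM : M.PosDef) :
    ∃ A : Matrix (Fin k) (Fin k) ℝ, A * A = M ∧ Aᵀ = A ∧ 0 < A.det := by
  refine ⟨CFC.sqrt M, CFC.sqrt_mul_sqrt_self M hM.posSemidef.nonneg, ?_, ?_⟩
  · exact (Matrix.conjTranspose_eq_transpose_of_trivial _).symm.trans
      (CFC.sqrt_nonneg M).posSemidef.isHermitian.eq
  · have h1 : (CFC.sqrt M).det * (CFC.sqrt M).det = M.det := by
      rw [← det_mul, CFC.sqrt_mul_sqrt_self M hM.posSemidef.nonneg]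
    have h2 : 0 ≤ (CFC.sqrt M).det := by
      rw [(CFC.sqrt_nonneg M).posSemidef.isHermitian.det_eq_prod_eigenvalues]
      exact Finset.prod_nonneg fun i _ =>
        (CFC.sqrt_nonneg M).posSemidef.eigenvalues_nonneg i
    have h3 : 0 < M.det := hM.det_pos
    rcases h2.lt_or_eq with h | h
    · exact h
    · exfalso; rw [← h] at h1; simp at h1; rw [← h1] at h3; simp at h3

lemma EM_ellipsoid_eq_image (M A : Matrix (Fin k) (Fin k) ℝ) (hAA : A * A = M)
    (hAt : Aᵀ = A) (hAd : 0 < A.det) :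
    {x : Fin k → ℝ | x ⬝ᵥ M⁻¹.mulVec x ≤ 1}
      = (fun y => A.mulVec y) '' {y : Fin k → ℝ | y ⬝ᵥ y ≤ 1} := by
  have hu : IsUnit A.det := hAd.ne'.isUnit
  have hinv : A⁻¹ * A = 1 := nonsing_inv_mul A hu
  have hinv' : A * A⁻¹ = 1 := mul_nonsing_inv A hu
  have hAiy : ∀ y : Fin k → ℝ, A⁻¹.mulVec (A.mulVec y) = y := by
    intro y; rw [mulVec_mulVec, hinv, one_mulVec]
  have hAy : ∀ x : Fin k → ℝ, A.mulVec (A⁻¹.mulVec x) = x := by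
    intro x; rw [mulVec_mulVec, hinv', one_mulVec]
  have key : ∀ x : Fin k → ℝ, x ⬝ᵥ M⁻¹.mulVec x = A⁻¹.mulVec x ⬝ᵥ A⁻¹.mulVec x := by
    intro x
    have hMinv : M⁻¹ = (A⁻¹)ᵀ * A⁻¹ := by
      rw [← hAA, Matrix.mul_inv_rev, transpose_nonsing_inv, hAt]
    rw [hMinv, ← mulVec_mulVec, dotProduct_mulVec, vecMul_transpose]
  ext x
  simp only [Set.mem_setOf_eq, Set.mem_image]
  constructor
  · intro hx
    exact ⟨A⁻¹.mulVec x, by simpa [← key x] using hx, hAy x⟩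
  · rintro ⟨y, hy, rfl⟩
    rw [key, hAiy]; exact hy

lemma EM_ellipsoid_volume (M : Matrix (Fin k) (Fin k) ℝ) (hM : M.PosDef) (c : Fin k → ℝ) :
    volume {x : Fin k → ℝ | (x - c) ⬝ᵥ M⁻¹.mulVec (x - c) ≤ 1}
      = ENNReal.ofReal (Real.sqrt M.det) * volume {y : Fin k → ℝ | y ⬝ᵥ y ≤ 1} := by
  obtain ⟨A, hAA, hAt, hAd⟩ := EM_sqrt_facts M hM
  have htrans : {x : Fin k → ℝ | (x - c) ⬝ᵥ M⁻¹.mulVec (x - c) ≤ 1}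
      = (fun x : Fin k → ℝ => x + (-c)) ⁻¹' {x : Fin k → ℝ | x ⬝ᵥ M⁻¹.mulVec x ≤ 1} := by
    ext x; simp [sub_eq_add_neg]
  rw [htrans, measure_preimage_add_right, EM_ellipsoid_eq_image M A hAA hAt hAd]
  have himg : (fun y : Fin k → ℝ => A.mulVec y) = ⇑(Matrix.toLin' A) := by
    funext y; simp [Matrix.toLin'_apply]
  rw [himg, Measure.addHaar_image_linearMap, LinearMap.det_toLin']
  congr 1
  rw [abs_of_pos hAd]
  congr 1
  rw [← hAA, det_mul, Real.sqrt_mul_self hAd.le]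

lemma EM_unit_ball_vol_fin : volume {y : Fin k → ℝ | y ⬝ᵥ y ≤ 1} < ⊤ := by
  refine lt_of_le_of_lt (measure_mono ?_) (measure_closedBall_lt_top (x := (0 : Fin k → ℝ)) (r := 1))
  intro y hy
  simp only [Set.mem_setOf_eq] at hy
  rw [Metric.mem_closedBall, dist_zero_right]
  refine (pi_norm_le_iff_of_nonneg zero_le_one).2 fun i => ?_
  have h1 : y i * y i ≤ y ⬝ᵥ y := by
    have := Finset.single_le_sum (f := fun j => y j * y j)
      (fun j _ => mul_self_nonneg (y j)) (Finset.mem_univ i)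
    simpa [dotProduct] using this
  have h2 : |y i| ≤ 1 := abs_le_one_iff_mul_self_le_one.2 (le_trans h1 hy)
  simpa using h2


lemma EM_rho_pos {k : ℕ} (hk : 2 ≤ k) :
    0 < ((k : ℝ) ^ 2 / ((k : ℝ) ^ 2 - 1)) ^ k * (((k : ℝ) - 1) / ((k : ℝ) + 1)) := by
  have hk2 : (2 : ℝ) ≤ (k : ℝ) := by exact_mod_cast hk
  have h1 : (0 : ℝ) < (k : ℝ) ^ 2 - 1 := by nlinarith
  have h2 : (0 : ℝ) < (k : ℝ) - 1 := by linarith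
  have h3 : (0 : ℝ) < (k : ℝ) + 1 := by linarith
  positivity

lemma EM_rho_le {k : ℕ} (hk : 2 ≤ k) :
    ((k : ℝ) ^ 2 / ((k : ℝ) ^ 2 - 1)) ^ k * (((k : ℝ) - 1) / ((k : ℝ) + 1))
      ≤ Real.exp (-(1 / ((k : ℝ) + 1))) := by
  set K : ℝ := (k : ℝ) with hK
  have hk2 : (2 : ℝ) ≤ K := by rw [hK]; exact_mod_cast hk
  have hd : (0 : ℝ) < K ^ 2 - 1 := by nlinarith
  have hK1 : (0 : ℝ) < K + 1 := by linarith
  have hKm1 : (0 : ℝ) < K - 1 := by linarith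
  -- factorization
  have hfac : (K ^ 2 / (K ^ 2 - 1)) ^ k * ((K - 1) / (K + 1))
      = (K / (K + 1)) ^ 2 * (K ^ 2 / (K ^ 2 - 1)) ^ (k - 1) := by
    have hkk : k = (k - 1) + 1 := (Nat.succ_pred_eq_of_pos (by omega)).symm
    rw [show (K ^ 2 / (K ^ 2 - 1)) ^ k = (K ^ 2 / (K ^ 2 - 1)) ^ (k - 1) * (K ^ 2 / (K ^ 2 - 1))
      from by rw [← pow_succ, ← hkk]]
    have : K ^ 2 / (K ^ 2 - 1) * ((K - 1) / (K + 1)) = (K / (K + 1)) ^ 2 := by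
      have h1 : K ^ 2 - 1 = (K - 1) * (K + 1) := by ring
      rw [h1]; field_simp
    rw [mul_assoc, this]; ring
  rw [hfac]
  -- bound the two factors
  have hb1 : (K / (K + 1)) ^ 2 ≤ Real.exp (-(1 / (K + 1))) ^ 2 := by
    refine pow_le_pow_left₀ (by positivity) ?_ 2
    have : K / (K + 1) = 1 + (-(1 / (K + 1))) := by field_simp; ring
    rw [this]
    calc 1 + -(1 / (K + 1)) = -(1 / (K + 1)) + 1 := by ring
      _ ≤ Real.exp (-(1 / (K + 1))) := Real.add_one_le_exp _
  have hb2 : (K ^ 2 / (K ^ 2 - 1)) ^ (k - 1) ≤ Real.exp (1 / (K ^ 2 - 1)) ^ (k - 1) := by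
    refine pow_le_pow_left₀ (by positivity) ?_ _
    have : K ^ 2 / (K ^ 2 - 1) = 1 + 1 / (K ^ 2 - 1) := by field_simp; ring
    rw [this, add_comm]
    exact Real.add_one_le_exp _
  have hcast : ((k - 1 : ℕ) : ℝ) = K - 1 := by
    rw [hK]; exact_mod_cast Nat.cast_sub (by omega)
  have hb2' : Real.exp (1 / (K ^ 2 - 1)) ^ (k - 1) = Real.exp ((K - 1) / (K ^ 2 - 1)) := by
    rw [← Real.exp_nat_mul, hcast, mul_one_div]
  have heq : (K - 1) / (K ^ 2 - 1) = 1 / (K + 1) := by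
    rw [show K ^ 2 - 1 = (K - 1) * (K + 1) from by ring]
    rw [div_mul_eq_div_div]
    rw [div_self hKm1.ne']
  calc (K / (K + 1)) ^ 2 * (K ^ 2 / (K ^ 2 - 1)) ^ (k - 1)
      ≤ Real.exp (-(1 / (K + 1))) ^ 2 * Real.exp ((K - 1) / (K ^ 2 - 1)) := by
        apply mul_le_mul hb1 (hb2.trans_eq hb2') (by positivity) (by positivity)
    _ = Real.exp (-(2 / (K + 1)) + 1 / (K + 1)) := by
        rw [heq, ← Real.exp_nat_mul, ← Real.exp_add]
        congr 1; push_cast; ring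
    _ ≤ Real.exp (-(1 / (K + 1))) := by
        exact le_of_eq (by rw [show -(2 / (K + 1)) + 1 / (K + 1) = -(1 / (K + 1)) from by ring])

/-- Iterating the ellipsoid-method update, the volume of the `N`-th
ellipsoid is at most `exp(-N/(2(k+1)))` times the volume of the initial one; in
particular the volumes tend to zero. -/
theorem ellipsoid_method_volumes_shrink
    (k : ℕ) (hk : 2 ≤ k)
    (B : ℕ → Matrix (Fin k) (Fin k) ℝ) (c : ℕ → Fin k → ℝ) (a : ℕ → Fin k → ℝ)
    (hB0 : (B 0).PosDef)
    (ha : ∀ j, a j ≠ 0)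
    (hBrec : ∀ j, B (j + 1) = ((k : ℝ) ^ 2 / ((k : ℝ) ^ 2 - 1)) •
      (B j - (2 / (((k : ℝ) + 1) * (a j ⬝ᵥ (B j).mulVec (a j)))) •
        vecMulVec ((B j).mulVec (a j)) ((B j).mulVec (a j))))
    (hcrec : ∀ j, c (j + 1) = c j -
      (((k : ℝ) + 1) * Real.sqrt (a j ⬝ᵥ (B j).mulVec (a j)))⁻¹ • (B j).mulVec (a j)) :
    (∀ N : ℕ,
      volume {x : Fin k → ℝ | (x - c N) ⬝ᵥ (B N)⁻¹.mulVec (x - c N) ≤ 1} ≤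
        ENNReal.ofReal (Real.exp (-(N : ℝ) / (2 * ((k : ℝ) + 1)))) *
          volume {x : Fin k → ℝ | (x - c 0) ⬝ᵥ (B 0)⁻¹.mulVec (x - c 0) ≤ 1}) ∧
    Filter.Tendsto
      (fun j : ℕ => volume {x : Fin k → ℝ | (x - c j) ⬝ᵥ (B j)⁻¹.mulVec (x - c j) ≤ 1})
      Filter.atTop (nhds 0) := by
  have hk2 : (2 : ℝ) ≤ (k : ℝ) := by exact_mod_cast hk
  set ρ : ℝ := ((k : ℝ) ^ 2 / ((k : ℝ) ^ 2 - 1)) ^ k * (((k : ℝ) - 1) / ((k : ℝ) + 1)) with hρ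
  have hρpos : 0 < ρ := EM_rho_pos hk
  have hρle : ρ ≤ Real.exp (-(1 / ((k : ℝ) + 1))) := EM_rho_le hk
  have hPD : ∀ j, (B j).PosDef := by
    intro j; induction j with
    | zero => exact hB0
    | succ j ih => rw [hBrec j]; exact EM_step_posDef hk _ ih _ (ha j)
  have hdet : ∀ j, (B j).det = ρ ^ j * (B 0).det := by
    intro j; induction j with
    | zero => simp
    | succ j ih =>
      rw [hBrec j, EM_step_det hk _ (hPD j) _ (ha j), ih, pow_succ, hρ]; ring
  have hvol : ∀ j, volume {x : Fin k → ℝ | (x - c j) ⬝ᵥ (B j)⁻¹.mulVec (x - c j) ≤ 1}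
      = ENNReal.ofReal (Real.sqrt (B j).det) * volume {y : Fin k → ℝ | y ⬝ᵥ y ≤ 1} :=
    fun j => EM_ellipsoid_volume _ (hPD j) (c j)
  have hsq : ∀ N : ℕ, Real.sqrt (B N).det ≤
      Real.exp (-(N : ℝ) / (2 * ((k : ℝ) + 1))) * Real.sqrt (B 0).det := by
    intro N
    rw [hdet N, Real.sqrt_mul (pow_nonneg hρpos.le N)]
    apply mul_le_mul_of_nonneg_right _ (Real.sqrt_nonneg _)
    have h1 : ρ ^ N ≤ Real.exp (-(1 / ((k : ℝ) + 1))) ^ N :=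
      pow_le_pow_left₀ hρpos.le hρle N
    have h2 : Real.sqrt (ρ ^ N) ≤ Real.sqrt (Real.exp (-(1 / ((k : ℝ) + 1))) ^ N) :=
      Real.sqrt_le_sqrt h1
    refine h2.trans_eq ?_
    have hne : ((k : ℝ) + 1) ≠ 0 := by positivity
    have hiden : (N : ℝ) * -(1 / ((k : ℝ) + 1)) / 2 = -(N : ℝ) / (2 * ((k : ℝ) + 1)) := by
      rw [mul_neg, mul_one_div, neg_div, div_div, mul_comm ((k : ℝ) + 1) 2, neg_div]
    rw [← Real.exp_nat_mul, ← Real.exp_half, hiden]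
  have part1 : ∀ N : ℕ,
      volume {x : Fin k → ℝ | (x - c N) ⬝ᵥ (B N)⁻¹.mulVec (x - c N) ≤ 1} ≤
        ENNReal.ofReal (Real.exp (-(N : ℝ) / (2 * ((k : ℝ) + 1)))) *
          volume {x : Fin k → ℝ | (x - c 0) ⬝ᵥ (B 0)⁻¹.mulVec (x - c 0) ≤ 1} := by
    intro N
    rw [hvol N, hvol 0]
    calc ENNReal.ofReal (Real.sqrt (B N).det) * volume {y : Fin k → ℝ | y ⬝ᵥ y ≤ 1}
        ≤ ENNReal.ofReal (Real.exp (-(N : ℝ) / (2 * ((k : ℝ) + 1))) * Real.sqrt (B 0).det) *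
            volume {y : Fin k → ℝ | y ⬝ᵥ y ≤ 1} :=
          mul_le_mul_left (ENNReal.ofReal_le_ofReal (hsq N)) _
      _ = ENNReal.ofReal (Real.exp (-(N : ℝ) / (2 * ((k : ℝ) + 1)))) *
            (ENNReal.ofReal (Real.sqrt (B 0).det) * volume {y : Fin k → ℝ | y ⬝ᵥ y ≤ 1}) := by
          rw [ENNReal.ofReal_mul (Real.exp_nonneg _), mul_assoc]
  refine ⟨part1, ?_⟩
  set C : ENNReal := volume {x : Fin k → ℝ | (x - c 0) ⬝ᵥ (B 0)⁻¹.mulVec (x - c 0) ≤ 1} with hC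
  have hCfin : C ≠ ⊤ := by
    rw [hC, hvol 0]
    exact ENNReal.mul_ne_top ENNReal.ofReal_ne_top EM_unit_ball_vol_fin.ne
  have h1 : Filter.Tendsto (fun j : ℕ => -(j : ℝ) / (2 * ((k : ℝ) + 1)))
      Filter.atTop Filter.atBot := by
    have hneg : -(1 / (2 * ((k : ℝ) + 1))) < 0 := by
      have h0 : (0 : ℝ) < 1 / (2 * ((k : ℝ) + 1)) := by positivity
      linarith
    have := (tendsto_natCast_atTop_atTop (R := ℝ)).const_mul_atTop_of_neg hneg
    refine this.congr fun j => ?_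
    field_simp
  have h2 : Filter.Tendsto (fun j : ℕ => Real.exp (-(j : ℝ) / (2 * ((k : ℝ) + 1))))
      Filter.atTop (nhds 0) := Real.tendsto_exp_atBot.comp h1
  have h3 : Filter.Tendsto
      (fun j : ℕ => ENNReal.ofReal (Real.exp (-(j : ℝ) / (2 * ((k : ℝ) + 1)))) * C)
      Filter.atTop (nhds 0) := by
    have h4 := ENNReal.Tendsto.mul_const (ENNReal.tendsto_ofReal h2) (Or.inr hCfin)
    simpa using h4
  exact tendsto_of_tendsto_of_tendsto_of_le_of_le tendsto_const_nhds h3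
    (fun j => zero_le) (fun j => part1 j)
end

section
/- Let p be a nonconstant complex polynomial, z₀ ∈ ℂ with p(z₀) ≠ 0 and p'(z₀) ≠ 0, and let r > 0 be such that every root of p lies in the closed disk of radius r centered at z₀. Identify ℂ with ℝ² and let a ∈ ℝ² be the vector corresponding to p(z₀)/p'(z₀). Set B = r²·I (I the 2×2 identity), c ∈ ℝ² the point corresponding to z₀, c' = c − Ba/(3√(aᵀBa)), and B' = (4/3)·( B − 2(Ba)(Ba)ᵀ/(3·aᵀBa) ). Then p has a root θ whose corresponding point x_θ ∈ ℝ² satisfies (x_θ − c')ᵀ (B')⁻¹ (x_θ − c') ≤ 1, i.e., the updated ellipsoid E(B',c') contains a root of p. -/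
open Matrix Polynomial


lemma exists_root_halfplane (p : Polynomial ℂ) (z₀ : ℂ)
    (h0 : p.eval z₀ ≠ 0) (h1 : p.derivative.eval z₀ ≠ 0) :
    ∃ θ : ℂ, p.eval θ = 0 ∧
      0 < ((p.eval z₀ / p.derivative.eval z₀) / (z₀ - θ)).re := by
  classical
  have hpne : p ≠ 0 := fun h => h0 (by simp [h])
  set k := p.leadingCoeff with hk
  set S := p.roots with hS
  have hfac : p = C k * (S.map (fun θ => X - C θ)).prod :=
    (C_leadingCoeff_mul_prod_multiset_X_sub_C IsAlgClosed.card_roots_eq_natDegree).symm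
  have hkne : k ≠ 0 := leadingCoeff_ne_zero.2 hpne
  set P : ℂ := (S.map (fun θ => z₀ - θ)).prod with hP
  have hevalp : p.eval z₀ = k * P := by
    conv_lhs => rw [hfac]
    rw [eval_mul, eval_C, eval_multiset_prod, Multiset.map_map]
    simp [hP]
  have hPne : P ≠ 0 := by
    intro h; exact h0 (by rw [hevalp, h, mul_zero])
  have hnz : ∀ θ ∈ S, z₀ - θ ≠ 0 := by
    intro θ hθ h
    exact hPne (Multiset.prod_eq_zero (by
      exact Multiset.mem_map.2 ⟨θ, hθ, h⟩))
  -- derivative eval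
  have hderiv : p.derivative.eval z₀ =
      k * (S.map (fun θ => ((S.erase θ).map (fun η => z₀ - η)).prod)).sum := by
    conv_lhs => rw [hfac]
    rw [derivative_mul, derivative_C, zero_mul, zero_add, eval_mul, eval_C]
    congr 1
    rw [derivative_prod]
    rw [show (eval z₀ : Polynomial ℂ → ℂ) = ⇑(evalRingHom z₀) from rfl,
      map_multiset_sum, Multiset.map_map]
    congr 1
    apply Multiset.map_congr rfl
    intro θ hθ
    simp [eval_multiset_prod, Multiset.map_map]
  -- each erased prod equals P / (z₀ - θ)
  have herase : ∀ θ ∈ S, ((S.erase θ).map (fun η => z₀ - η)).prod = P * (z₀ - θ)⁻¹ := by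
    intro θ hθ
    have := Multiset.prod_map_erase (f := fun η => z₀ - η) hθ
    rw [← hP] at this
    field_simp [hnz θ hθ]
    linear_combination this
  have hderiv2 : p.derivative.eval z₀ = p.eval z₀ * (S.map (fun θ => (z₀ - θ)⁻¹)).sum := by
    rw [hderiv, Multiset.map_congr rfl herase, hevalp]
    rw [show (fun θ => P * (z₀ - θ)⁻¹) = (fun θ => P * (fun η => (z₀ - η)⁻¹) θ) from rfl,
      Multiset.sum_map_mul_left]
    ring
  set w := p.eval z₀ / p.derivative.eval z₀ with hw
  have hsum1 : (S.map (fun θ => w / (z₀ - θ))).sum = 1 := by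
    have : (fun θ => w / (z₀ - θ)) = (fun θ => w * (fun η => (z₀ - η)⁻¹) θ) := by
      funext θ; rw [div_eq_mul_inv]
    rw [this, Multiset.sum_map_mul_left]
    have h2 : (S.map fun θ => (z₀ - θ)⁻¹).sum = p.derivative.eval z₀ / p.eval z₀ := by
      rw [eq_div_iff h0, mul_comm, ← hderiv2]
    rw [h2, hw]
    field_simp
  -- take real parts
  have hre : (S.map (fun θ => ((w / (z₀ - θ)).re))).sum = 1 := by
    have := congrArg Complex.re hsum1
    rw [Complex.one_re] at this
    rw [← this]
    have h3 := map_multiset_sum Complex.reAddGroupHom (S.map fun θ => w / (z₀ - θ))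
    simpa [Multiset.map_map] using h3.symm
  by_contra hcon
  push_neg at hcon
  have hle : ∀ x ∈ (S.map (fun θ => ((w / (z₀ - θ)).re))), x ≤ 0 := by
    intro x hx
    obtain ⟨θ, hθ, rfl⟩ := Multiset.mem_map.1 hx
    have hroot : p.eval θ = 0 := (isRoot_of_mem_roots hθ)
    exact hcon θ hroot
  have hsle : (S.map (fun θ => ((w / (z₀ - θ)).re))).sum ≤ (S.map (fun _ => (0:ℝ))).sum := by
    apply Multiset.sum_map_le_sum_map
    intro θ hθ
    exact hcon θ (isRoot_of_mem_roots hθ)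
  simp only [Multiset.map_const', Multiset.sum_replicate, smul_zero] at hsle
  linarith


lemma dot_mulVec_fin_two (m00 m01 m10 m11 v1 v2 : ℝ) :
    ![v1, v2] ⬝ᵥ (!![m00, m01; m10, m11]).mulVec ![v1, v2]
      = m00*v1*v1 + m01*v1*v2 + m10*v2*v1 + m11*v2*v2 := by
  simp [Matrix.mulVec, dotProduct, Fin.sum_univ_two]
  ring

lemma key_ineq (r α a1 a2 y1 y2 : ℝ) (hr : 0 < r) (hα : 0 < α)
    (hα2 : α^2 = a1^2 + a2^2)
    (hdisk : y1^2 + y2^2 ≤ r^2) (hhalf : a1*y1 + a2*y2 ≤ 0) :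
    3/(4*r^2) * (((y1 + r/(3*α)*a1)^2 + (y2 + r/(3*α)*a2)^2)
      + 2/(a1^2+a2^2) * (a1*(y1 + r/(3*α)*a1) + a2*(y2 + r/(3*α)*a2))^2) ≤ 1 := by
  have hα2pos : 0 < a1^2 + a2^2 := by nlinarith
  have hrne : r ≠ 0 := ne_of_gt hr
  have hαne : α ≠ 0 := ne_of_gt hα
  set s := a1*y1 + a2*y2 with hs
  have hcs : s^2 ≤ α^2*(y1^2+y2^2) := by
    rw [hα2]; nlinarith [sq_nonneg (a1*y2 - a2*y1)]
  have h1 : s^2 ≤ (r*α)^2 := by nlinarith [mul_le_mul_of_nonneg_left hdisk (sq_nonneg α)]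
  have hsge : -(r*α) ≤ s := by nlinarith [mul_pos hr hα]
  have key2 : α^2*(y1^2+y2^2) + 2*r*α*s + 2*s^2 ≤ r^2*α^2 := by
    have h2 : 0 ≤ (-s) * (s + r*α) := mul_nonneg (by linarith) (by linarith)
    nlinarith [mul_le_mul_of_nonneg_left hdisk (sq_nonneg α)]
  have e1 : (y1 + r/(3*α)*a1)^2 + (y2 + r/(3*α)*a2)^2
      = (y1^2+y2^2) + 2*(r/(3*α))*s + (r/(3*α))^2*(a1^2+a2^2) := by rw [hs]; ring
  have e2 : a1*(y1 + r/(3*α)*a1) + a2*(y2 + r/(3*α)*a2)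
      = s + (r/(3*α))*(a1^2+a2^2) := by rw [hs]; ring
  rw [e1, e2, ← hα2]
  have hEq : 3/(4*r^2) * (((y1^2+y2^2) + 2*(r/(3*α))*s + (r/(3*α))^2*α^2)
        + 2/α^2 * (s + (r/(3*α))*α^2)^2)
      = 1 - 3/(4*r^2*α^2) * (r^2*α^2 - (α^2*(y1^2+y2^2) + 2*r*α*s + 2*s^2)) := by
    field_simp
    ring
  rw [hEq]
  have hpos : 0 ≤ 3/(4*r^2*α^2) * (r^2*α^2 - (α^2*(y1^2+y2^2) + 2*r*α*s + 2*s^2)) :=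
    mul_nonneg (by positivity) (by linarith)
  linarith

set_option maxHeartbeats 1000000 in
/-- One step of the Newton–Ellipsoid method: starting from the disk
`E(r²I, z₀)` containing all roots of `p`, the updated ellipsoid `E(B',c')` determined by
the half-plane with normal `a = p(z₀)/p'(z₀)` still contains a root of `p`. -/
theorem newton_ellipsoid_step_contains_root
    (p : Polynomial ℂ) (hp : 1 ≤ p.natDegree)
    (z₀ : ℂ) (h0 : p.eval z₀ ≠ 0) (h1 : p.derivative.eval z₀ ≠ 0)
    (r : ℝ) (hr : 0 < r)
    (hroots : ∀ θ : ℂ, p.eval θ = 0 → ‖θ - z₀‖ ≤ r)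
    (a : Fin 2 → ℝ)
    (ha : a = ![(p.eval z₀ / p.derivative.eval z₀).re, (p.eval z₀ / p.derivative.eval z₀).im])
    (c : Fin 2 → ℝ) (hc : c = ![z₀.re, z₀.im])
    (B : Matrix (Fin 2) (Fin 2) ℝ) (hB : B = r ^ 2 • (1 : Matrix (Fin 2) (Fin 2) ℝ))
    (c' : Fin 2 → ℝ) (hc' : c' = c - (3 * Real.sqrt (a ⬝ᵥ B.mulVec a))⁻¹ • B.mulVec a)
    (B' : Matrix (Fin 2) (Fin 2) ℝ)
    (hB' : B' = (4 / 3 : ℝ) •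
      (B - (2 / (3 * (a ⬝ᵥ B.mulVec a))) • vecMulVec (B.mulVec a) (B.mulVec a))) :
    ∃ θ : ℂ, p.eval θ = 0 ∧
      (![θ.re, θ.im] - c') ⬝ᵥ B'⁻¹.mulVec (![θ.re, θ.im] - c') ≤ 1 := by
  have hrne : r ≠ 0 := ne_of_gt hr
  set w : ℂ := p.eval z₀ / p.derivative.eval z₀ with hw
  have hwne : w ≠ 0 := div_ne_zero h0 h1
  have hα2pos : 0 < w.re^2 + w.im^2 := by
    have := Complex.normSq_pos.2 hwne
    rw [Complex.normSq_apply] at this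
    nlinarith
  have hα2ne : w.re^2 + w.im^2 ≠ 0 := ne_of_gt hα2pos
  set α : ℝ := Real.sqrt (w.re^2 + w.im^2) with hαdef
  have hα : 0 < α := Real.sqrt_pos.2 hα2pos
  have hαsq : α^2 = w.re^2 + w.im^2 := Real.sq_sqrt hα2pos.le
  -- obtain a root in the half plane
  obtain ⟨θ, hθ0, hθre⟩ := exists_root_halfplane p z₀ h0 h1
  rw [← hw] at hθre
  refine ⟨θ, hθ0, ?_⟩
  have hzθne : z₀ - θ ≠ 0 := sub_ne_zero.2 (fun h => h0 (h ▸ hθ0))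
  have hhalf : w.re*(θ.re - z₀.re) + w.im*(θ.im - z₀.im) ≤ 0 := by
    have hns : 0 < Complex.normSq (z₀ - θ) := Complex.normSq_pos.2 hzθne
    rw [Complex.div_re, ← add_div, lt_div_iff₀ hns] at hθre
    rw [Complex.sub_re, Complex.sub_im] at hθre
    nlinarith [hθre]
  have hdisk : (θ.re - z₀.re)^2 + (θ.im - z₀.im)^2 ≤ r^2 := by
    have h := hroots θ hθ0
    have h2 : Complex.normSq (θ - z₀) ≤ r^2 := by
      rw [← Complex.sq_norm]
      nlinarith [norm_nonneg (θ - z₀)]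
    rw [Complex.normSq_apply, Complex.sub_re, Complex.sub_im] at h2
    nlinarith [h2]
  subst hc' hB' hB hc ha
  -- compute the pieces
  have hBa : (r^2 • (1 : Matrix (Fin 2) (Fin 2) ℝ)).mulVec ![w.re, w.im]
      = ![r^2 * w.re, r^2 * w.im] := by
    funext i
    fin_cases i <;>
      simp [Matrix.mulVec, dotProduct, Fin.sum_univ_two, Matrix.smul_apply,
        Matrix.one_apply]
  have hdot : ![w.re, w.im] ⬝ᵥ (r^2 • (1 : Matrix (Fin 2) (Fin 2) ℝ)).mulVec ![w.re, w.im]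
      = r^2 * (w.re^2 + w.im^2) := by
    rw [hBa]
    simp [dotProduct, Fin.sum_univ_two]
    ring
  have hsqrt : Real.sqrt (![w.re, w.im] ⬝ᵥ
      (r^2 • (1 : Matrix (Fin 2) (Fin 2) ℝ)).mulVec ![w.re, w.im]) = r * α := by
    rw [hdot, hαdef, Real.sqrt_mul (sq_nonneg r), Real.sqrt_sq hr.le]
  rw [hsqrt, hdot, hBa]
  have hαne : α ≠ 0 := ne_of_gt hα
  have hL : (4 / 3 : ℝ) • ((r^2 • (1 : Matrix (Fin 2) (Fin 2) ℝ))
        - (2 / (3 * (r^2 * (w.re^2 + w.im^2)))) •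
          vecMulVec ![r^2 * w.re, r^2 * w.im] ![r^2 * w.re, r^2 * w.im])
      = !![(4/3 : ℝ)*(r^2 - 2/(3*(r^2*(w.re^2 + w.im^2)))*(r^2*w.re*(r^2*w.re))),
           (4/3 : ℝ)*(0 - 2/(3*(r^2*(w.re^2 + w.im^2)))*(r^2*w.re*(r^2*w.im)));
           (4/3 : ℝ)*(0 - 2/(3*(r^2*(w.re^2 + w.im^2)))*(r^2*w.im*(r^2*w.re))),
           (4/3 : ℝ)*(r^2 - 2/(3*(r^2*(w.re^2 + w.im^2)))*(r^2*w.im*(r^2*w.im)))] := by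
    ext i j
    fin_cases i <;> fin_cases j <;>
      simp [Matrix.smul_apply, Matrix.sub_apply, Matrix.one_apply, Matrix.vecMulVec_apply,
        smul_eq_mul]
  have hMul : !![(4/3 : ℝ)*(r^2 - 2/(3*(r^2*(w.re^2 + w.im^2)))*(r^2*w.re*(r^2*w.re))),
           (4/3 : ℝ)*(0 - 2/(3*(r^2*(w.re^2 + w.im^2)))*(r^2*w.re*(r^2*w.im)));
           (4/3 : ℝ)*(0 - 2/(3*(r^2*(w.re^2 + w.im^2)))*(r^2*w.im*(r^2*w.re))),
           (4/3 : ℝ)*(r^2 - 2/(3*(r^2*(w.re^2 + w.im^2)))*(r^2*w.im*(r^2*w.im)))] *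
      !![3/(4*r^2)*(1 + 2/(w.re^2 + w.im^2)*(w.re*w.re)), 3/(4*r^2)*(2/(w.re^2 + w.im^2)*(w.re*w.im));
         3/(4*r^2)*(2/(w.re^2 + w.im^2)*(w.im*w.re)), 3/(4*r^2)*(1 + 2/(w.re^2 + w.im^2)*(w.im*w.im))]
      = 1 := by
    rw [Matrix.mul_fin_two, Matrix.one_fin_two]
    ext i j
    fin_cases i <;> fin_cases j <;>
      · simp only [Matrix.cons_val', Matrix.cons_val_zero, Matrix.cons_val_one,
          Matrix.head_cons, Matrix.head_fin_const, Matrix.empty_val',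
          Matrix.cons_val_fin_one, Matrix.of_apply, Fin.zero_eta, Fin.mk_one]
        field_simp
        ring
  have hInv : ((4 / 3 : ℝ) • ((r^2 • (1 : Matrix (Fin 2) (Fin 2) ℝ))
        - (2 / (3 * (r^2 * (w.re^2 + w.im^2)))) •
          vecMulVec ![r^2 * w.re, r^2 * w.im] ![r^2 * w.re, r^2 * w.im]))⁻¹
      = !![3/(4*r^2)*(1 + 2/(w.re^2 + w.im^2)*(w.re*w.re)), 3/(4*r^2)*(2/(w.re^2 + w.im^2)*(w.re*w.im));
         3/(4*r^2)*(2/(w.re^2 + w.im^2)*(w.im*w.re)), 3/(4*r^2)*(1 + 2/(w.re^2 + w.im^2)*(w.im*w.im))] := by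
    rw [hL]
    exact Matrix.inv_eq_right_inv hMul
  rw [hInv]
  have hvec : ![θ.re, θ.im] - (![z₀.re, z₀.im] - (3*(r*α))⁻¹ • ![r^2*w.re, r^2*w.im])
      = ![θ.re - z₀.re + r/(3*α)*w.re, θ.im - z₀.im + r/(3*α)*w.im] := by
    funext i
    fin_cases i <;>
      · simp [Pi.sub_apply, Pi.smul_apply, smul_eq_mul]
        field_simp
        ring
  rw [hvec, dot_mulVec_fin_two]
  refine le_trans (le_of_eq ?_)
    (key_ineq r α w.re w.im (θ.re - z₀.re) (θ.im - z₀.im) hr hα hαsq hdisk hhalf)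
  ring
end

section
/- Let p(z) = (z − α)(z − β) with α, β ∈ ℂ, α ≠ β, and let N(z) = z − p(z)/p'(z) denote the Newton iteration map of p. If z₀ ∈ ℂ satisfies |z₀ − α| < |z₀ − β|, then the Newton orbit z_{k+1} = N(z_k) is well-defined for all k (p'(z_k) ≠ 0 for every k) and converges to α. In other words, the basin of attraction of α under Newton's method contains the open Voronoi region { z : |z − α| < |z − β| } of α. -/
lemma newton_alg (α β w : ℂ) (hd : 2*w - α - β ≠ 0) :
    (w - (w-α)*(w-β)/(2*w-α-β)) - α = (w-α)^2/(2*w-α-β) ∧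
    (w - (w-α)*(w-β)/(2*w-α-β)) - β = (w-β)^2/(2*w-α-β) := by
  constructor <;> (rw [eq_div_iff hd, sub_mul, sub_mul, div_mul_cancel₀ _ hd]; ring)

/-- For a quadratic `p(z) = (z - α)(z - β)` with distinct roots, Newton's
method started at any seed strictly closer to `α` than to `β` is well defined for all
iterates and converges to `α`: the basin of attraction of `α` contains the open Voronoi
region of `α`. -/
theorem newton_quadratic_voronoi_basin
    (α β : ℂ) (hαβ : α ≠ β)
    (p : Polynomial ℂ)
    (hp : p = (Polynomial.X - Polynomial.C α) * (Polynomial.X - Polynomial.C β))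
    (z : ℕ → ℂ)
    (hz0 : ‖z 0 - α‖ < ‖z 0 - β‖)
    (hrec : ∀ k, z (k + 1) = z k - p.eval (z k) / p.derivative.eval (z k)) :
    (∀ k, p.derivative.eval (z k) ≠ 0) ∧ Filter.Tendsto z Filter.atTop (nhds α) := by
  have hpe : ∀ w : ℂ, p.eval w = (w-α)*(w-β) := by intro w; simp [hp]
  have hde : ∀ w : ℂ, p.derivative.eval w = 2*w-α-β := by
    intro w; simp [hp]; ring
  -- if strictly closer, derivative nonzero
  have hdne : ∀ w : ℂ, ‖w - α‖ < ‖w - β‖ → 2*w-α-β ≠ 0 := by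
    intro w hlt h0
    have : w - α = -(w - β) := by linear_combination h0
    rw [this, norm_neg] at hlt
    exact lt_irrefl _ hlt
  -- main invariant
  have key : ∀ k, ‖z k - α‖ < ‖z k - β‖ := by
    intro k
    induction k with
    | zero => exact hz0
    | succ k ih =>
      have hd := hdne _ ih
      have halg := newton_alg α β (z k) hd
      have hz1 : z (k+1) = z k - (z k - α)*(z k - β)/(2*z k - α - β) := by
        rw [hrec k, hpe, hde]
      rw [hz1, halg.1, halg.2, norm_div, norm_div, norm_pow, norm_pow]
      have hdb : 0 < ‖2*z k - α - β‖ := by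
        simpa using (norm_pos_iff.mpr hd)
      have := norm_nonneg (z k - α)
      gcongr
  have hder : ∀ k, p.derivative.eval (z k) ≠ 0 := by
    intro k; rw [hde]; exact hdne _ (key k)
  refine ⟨hder, ?_⟩
  -- ratio sequence
  set r : ℕ → ℝ := fun k => ‖z k - α‖ / ‖z k - β‖ with hr
  have hbpos : ∀ k, 0 < ‖z k - β‖ := fun k =>
    lt_of_le_of_lt (norm_nonneg _) (key k)
  have hrnn : ∀ k, 0 ≤ r k := fun k => div_nonneg (norm_nonneg _) (hbpos k).le
  have hrlt : ∀ k, r k < 1 := fun k => (div_lt_one (hbpos k)).mpr (key k)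
  have hrsq : ∀ k, r (k+1) = (r k)^2 := by
    intro k
    have hd := hdne _ (key k)
    have halg := newton_alg α β (z k) hd
    have hz1 : z (k+1) = z k - (z k - α)*(z k - β)/(2*z k - α - β) := by
      rw [hrec k, hpe, hde]
    have hdb : ‖2*z k - α - β‖ ≠ 0 := norm_ne_zero_iff.mpr hd
    simp only [hr, hz1, halg.1, halg.2, norm_div, norm_pow]
    rw [div_pow]
    rw [div_div_div_comm, div_self hdb, div_one]
  have hrbound : ∀ k, r k ≤ r 0 ^ (k+1) := by
    intro k
    induction k with
    | zero => simp
    | succ k ih =>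
      calc r (k+1) = (r k)^2 := hrsq k
        _ ≤ (r 0 ^ (k+1))^2 := by
            have := hrnn k
            gcongr
        _ = r 0 ^ (2*(k+1)) := by rw [← pow_mul]; ring_nf
        _ ≤ r 0 ^ (k+1+1) := pow_le_pow_of_le_one (hrnn 0) (hrlt 0).le (by omega)
  -- bound on |z k - α|
  set c : ℝ := ‖α - β‖ / (1 - r 0) with hc
  have h1r : 0 < 1 - r 0 := by linarith [hrlt 0]
  have hcnn : 0 ≤ c := div_nonneg (norm_nonneg _) h1r.le
  have hbound : ∀ k, ‖z k - α‖ ≤ c * r 0 ^ (k+1) := by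
    intro k
    have h1 : ‖z k - β‖ ≤ ‖z k - α‖ + ‖α - β‖ := by
      calc ‖z k - β‖ = ‖(z k - α) + (α - β)‖ := by ring_nf
        _ ≤ _ := norm_add_le _ _
    have h2 : ‖z k - α‖ = r k * ‖z k - β‖ := by
      rw [hr]; exact (div_mul_cancel₀ _ (hbpos k).ne').symm
    have h3 : r k ≤ r 0 := (hrbound k).trans (by
      simpa using pow_le_pow_of_le_one (hrnn 0) (hrlt 0).le (Nat.succ_le_succ (Nat.zero_le k)))
    have h4 : ‖z k - α‖ * (1 - r 0) ≤ r k * ‖α - β‖ := by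
      nlinarith [hrnn k, norm_nonneg (z k - α), norm_nonneg (α - β)]
    have h5 : ‖z k - α‖ ≤ r k * ‖α - β‖ / (1 - r 0) := by
      rw [le_div_iff₀ h1r]; exact h4
    calc ‖z k - α‖ ≤ r k * ‖α - β‖ / (1 - r 0) := h5
      _ ≤ r 0 ^ (k+1) * ‖α - β‖ / (1 - r 0) := by
          gcongr
          exact hrbound k
      _ = c * r 0 ^ (k+1) := by rw [hc]; ring
  -- convergence
  have htend : Filter.Tendsto (fun k => ‖z k - α‖) Filter.atTop (nhds 0) := by
    have hg : Filter.Tendsto (fun k => c * r 0 ^ (k+1)) Filter.atTop (nhds 0) := by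
      have := tendsto_pow_atTop_nhds_zero_of_lt_one (hrnn 0) (hrlt 0)
      have h' := this.comp (Filter.tendsto_add_atTop_nat 1)
      simpa using h'.const_mul c
    exact squeeze_zero (fun k => norm_nonneg _) hbound hg
  rw [tendsto_iff_norm_sub_tendsto_zero]
  simpa using htend
end

section
/- Let p be a complex polynomial of degree n ≥ 1 and θ a simple root of p (p(θ) = 0, p'(θ) ≠ 0). Fix an integer m ≥ 2 and define D_m and B_m by: D₀(z) = 1, D_k(z) = 0 for k < 0, D_m(z) = Σ_{i=1}^{n} (−1)^{i−1} p(z)^{i−1} (p^{(i)}(z)/i!) D_{m−i}(z), and B_m(z) = z − p(z)·D_{m−2}(z)/D_{m−1}(z). Then there exist δ > 0 and C > 0 such that for all z with |z − θ| < δ one has D_{m−1}(z) ≠ 0 and |B_m(z) − θ| ≤ C·|z − θ|^m. In particular, for any seed z₀ with |z₀ − θ| sufficiently small, the fixed-point iteration z_{k+1} = B_m(z_k) is well-defined and converges to θ with order of convergence m. -/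
open Polynomial
noncomputable def cc (p : Polynomial ℂ) (i : ℕ) : Polynomial ℂ :=
  derivative^[i] p * Polynomial.C ((i.factorial : ℂ)⁻¹)

noncomputable def Ep (p : Polynomial ℂ) (n : ℕ) : ℕ → Polynomial ℂ
  | 0 => 1
  | (k+1) => ∑ i ∈ Finset.Icc 1 n,
      (-1)^(i-1) * p^(i-1) * cc p i *
        (if h : 1 ≤ i ∧ i ≤ k+1 then Ep p n (k+1-i) else 0)
  decreasing_by omega

noncomputable def Epz (p : Polynomial ℂ) (n : ℕ) (k : ℤ) : Polynomial ℂ :=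
  if 0 ≤ k then Ep p n k.toNat else 0

lemma Epz_neg (p : Polynomial ℂ) (n : ℕ) {k : ℤ} (hk : k < 0) : Epz p n k = 0 := by
  simp [Epz, not_le.mpr hk]

lemma Epz_zero (p : Polynomial ℂ) (n : ℕ) : Epz p n 0 = 1 := by
  simp [Epz, Ep]

lemma Epz_rec (p : Polynomial ℂ) (n : ℕ) {k : ℤ} (hk : 1 ≤ k) :
    Epz p n k = ∑ i ∈ Finset.Icc 1 n,
      (-1)^(i-1) * p^(i-1) * cc p i * Epz p n (k - i) := by
  obtain ⟨k', rfl⟩ : ∃ k' : ℕ, k = (k' : ℤ) + 1 := by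
    refine ⟨(k-1).toNat, by omega⟩
  have e1 : Epz p n ((k' : ℤ)+1) = Ep p n (k'+1) := by
    rw [Epz, if_pos (by omega : (0:ℤ) ≤ (k':ℤ)+1)]
    congr 1
  rw [e1]
  rw [Ep]
  refine Finset.sum_congr rfl fun i hi => ?_
  have h1 : 1 ≤ i := (Finset.mem_Icc.mp hi).1
  by_cases h : i ≤ k' + 1
  · rw [dif_pos ⟨h1, h⟩]
    congr 1
    simp only [Epz, if_pos (by omega : (0:ℤ) ≤ (k':ℤ)+1 - i)]
    congr 1
    omega
  · rw [dif_neg (by omega), Epz_neg p n (by omega)]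

noncomputable def Rz (p : Polynomial ℂ) (n : ℕ) (θ : ℂ) (k : ℤ) : Polynomial ℂ :=
  (X - Polynomial.C θ) * Epz p n k - p * Epz p n (k-1)

lemma Rz_neg (p : Polynomial ℂ) (n : ℕ) (θ : ℂ) {k : ℤ} (hk : k < 0) :
    Rz p n θ k = 0 := by
  simp [Rz, Epz_neg p n hk, Epz_neg p n (by omega : k - 1 < 0)]

lemma Rz_zero (p : Polynomial ℂ) (n : ℕ) (θ : ℂ) :
    Rz p n θ 0 = X - Polynomial.C θ := by
  rw [Rz, Epz_zero, Epz_neg p n (by omega : (0:ℤ) - 1 < 0)]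
  ring

lemma Rz_rec (p : Polynomial ℂ) (n : ℕ) (θ : ℂ) {k : ℤ} (hk : 2 ≤ k) :
    Rz p n θ k = ∑ i ∈ Finset.Icc 1 n,
      (-1)^(i-1) * p^(i-1) * cc p i * Rz p n θ (k - i) := by
  rw [Rz, Epz_rec p n (by omega : 1 ≤ k), Epz_rec p n (by omega : 1 ≤ k - 1),
    Finset.mul_sum, Finset.mul_sum, ← Finset.sum_sub_distrib]
  refine Finset.sum_congr rfl fun i hi => ?_
  rw [Rz, show k - i - 1 = k - 1 - i by ring]
  ring

lemma cc_zero (p : Polynomial ℂ) : cc p 0 = p := by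
  simp [cc]

lemma cc_one (p : Polynomial ℂ) : cc p 1 = derivative p := by
  simp [cc]

noncomputable def Az (p : Polynomial ℂ) (n : ℕ) (θ : ℂ) (k : ℤ) : Polynomial ℂ :=
  ∑ i ∈ Finset.Icc 0 n, (-1)^i * p^i * cc p i * Rz p n θ (k - i)

lemma Az_eq_zero (p : Polynomial ℂ) (n : ℕ) (hn : 1 ≤ n) (θ : ℂ) {k : ℤ} (hk : 2 ≤ k) :
    Az p n θ k = 0 := by
  have hins : Finset.Icc 0 n = insert 0 (Finset.Icc 1 n) := by
    ext x; simp [Finset.mem_Icc, Finset.mem_insert]; omega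
  rw [Az, hins, Finset.sum_insert (by simp)]
  have h0 : ((-1:Polynomial ℂ)^(0:ℕ)) * p^(0:ℕ) * cc p 0 * Rz p n θ (k - (0:ℕ)) = p * Rz p n θ k := by
    simp [cc_zero]
  rw [h0]
  have h1 : ∑ i ∈ Finset.Icc 1 n, (-1:Polynomial ℂ)^i * p^i * cc p i * Rz p n θ (k - i)
      = -p * ∑ i ∈ Finset.Icc 1 n, (-1:Polynomial ℂ)^(i-1) * p^(i-1) * cc p i * Rz p n θ (k - i) := by
    rw [Finset.mul_sum]
    refine Finset.sum_congr rfl fun i hi => ?_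
    have h1i : 1 ≤ i := (Finset.mem_Icc.mp hi).1
    obtain ⟨j, rfl⟩ : ∃ j, i = j + 1 := ⟨i - 1, by omega⟩
    simp [pow_succ]
    ring
  rw [h1, ← Rz_rec p n θ hk]
  ring

lemma Leibniz_cc (q : Polynomial ℂ) (θ : ℂ) (j : ℕ) :
    cc ((X - Polynomial.C θ) * q) (j+1)
      = (X - Polynomial.C θ) * cc q (j+1) + cc q j := by
  have key : ∀ j : ℕ, derivative^[j+1] ((X - Polynomial.C θ) * q)
      = (X - Polynomial.C θ) * derivative^[j+1] q + (j+1 : ℕ) • derivative^[j] q := by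
    intro j
    induction j with
    | zero => simp [derivative_mul]; ring
    | succ j ih =>
      rw [Function.iterate_succ_apply', ih]
      simp [derivative_mul, Function.iterate_succ_apply', add_smul, succ_nsmul]
      ring
  rw [cc, key j, cc, cc]
  have hfac : ((j+1).factorial : ℂ)⁻¹ * (j+1 : ℕ) = ((j.factorial : ℂ))⁻¹ := by
    have h1 : (j.factorial:ℂ) ≠ 0 := Nat.cast_ne_zero.mpr j.factorial_ne_zero
    have h2 : ((j:ℂ)+1) ≠ 0 := Nat.cast_add_one_ne_zero j
    rw [Nat.factorial_succ]
    push_cast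
    rw [mul_inv]
    field_simp
  rw [add_mul, smul_mul_assoc]
  congr 1
  · ring
  · rw [nsmul_eq_mul]
    rw [mul_comm ((j+1 : ℕ) : Polynomial ℂ)]
    rw [mul_assoc]
    congr 1
    rw [← Polynomial.C_eq_natCast, ← Polynomial.C_mul, hfac]

lemma Epz_one (p : Polynomial ℂ) {n : ℕ} (hn : 1 ≤ n) : Epz p n 1 = derivative p := by
  rw [Epz_rec p n le_rfl]
  rw [Finset.sum_eq_single_of_mem 1 (Finset.mem_Icc.mpr ⟨le_rfl, hn⟩)]
  · simp [cc_one, Epz_zero]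
  · intro i hi hne
    have h1i : 1 ≤ i := (Finset.mem_Icc.mp hi).1
    rw [Epz_neg p n (by omega : (1:ℤ) - i < 0), mul_zero]

lemma Rz_one (p : Polynomial ℂ) {n : ℕ} (hn : 1 ≤ n) (θ : ℂ) :
    Rz p n θ 1 = (X - Polynomial.C θ) * derivative p - p := by
  rw [Rz, Epz_one p hn]
  norm_num [Epz_zero]

lemma Az_one (p : Polynomial ℂ) {n : ℕ} (hn : 1 ≤ n) (θ : ℂ) :
    Az p n θ 1 = -(p * p) := by
  have hins : Finset.Icc 0 n = insert 0 (Finset.Icc 1 n) := by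
    ext x; simp [Finset.mem_Icc, Finset.mem_insert]; omega
  rw [Az, hins, Finset.sum_insert (by simp)]
  rw [Finset.sum_eq_single_of_mem 1 (Finset.mem_Icc.mpr ⟨le_rfl, hn⟩)]
  · rw [cc_zero, cc_one]
    have e0 : (1:ℤ) - ((0:ℕ):ℤ) = 1 := by norm_num
    have e1 : (1:ℤ) - ((1:ℕ):ℤ) = 0 := by norm_num
    rw [e0, e1, Rz_one p hn θ, Rz_zero]
    ring
  · intro i hi hne
    have h1i : 1 ≤ i := (Finset.mem_Icc.mp hi).1
    rw [Rz_neg p n θ (by omega : (1:ℤ) - i < 0), mul_zero]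

noncomputable def Tz (p q : Polynomial ℂ) (n : ℕ) (θ : ℂ) (k : ℤ) (j : ℕ) : Polynomial ℂ :=
  (-1)^j * p^j * cc q j * Rz p n θ (k - j)

noncomputable def Gz (p q : Polynomial ℂ) (n : ℕ) (θ : ℂ) (k : ℤ) (j : ℕ) : Polynomial ℂ :=
  (-1)^j * p^j * cc q (j-1) * Rz p n θ (k - j)

noncomputable def Bz (p q : Polynomial ℂ) (n : ℕ) (θ : ℂ) (k : ℤ) : Polynomial ℂ :=
  ∑ j ∈ Finset.range (n+1), Tz p q n θ k j

lemma Az_eq (p : Polynomial ℂ) (n : ℕ) (θ : ℂ) (k : ℤ) :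
    Az p n θ k = ∑ j ∈ Finset.range (n+1), Tz p p n θ k j := by
  rw [Az, show Finset.Icc 0 n = Finset.range (n+1) by ext x; simp]
  rfl

lemma hpB (p q : Polynomial ℂ) (n : ℕ) (θ : ℂ) (k : ℤ) (hqn : derivative^[n] q = 0) :
    p * Bz p q n θ (k-1) = -(∑ j ∈ Finset.range (n+1), Gz p q n θ k j) + Gz p q n θ k 0 := by
  rw [Bz, Finset.mul_sum]
  have t1 : ∀ j : ℕ, p * Tz p q n θ (k-1) j = - Gz p q n θ k (j+1) := by
    intro j
    have hc : k - ((j+1:ℕ):ℤ) = k - 1 - j := by push_cast; ring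
    rw [Tz, Gz, Nat.add_sub_cancel, hc]
    ring
  calc ∑ j ∈ Finset.range (n+1), p * Tz p q n θ (k-1) j
      = ∑ j ∈ Finset.range (n+1), -Gz p q n θ k (j+1) :=
        Finset.sum_congr rfl fun j _ => t1 j
    _ = -∑ j ∈ Finset.range (n+1), Gz p q n θ k (j+1) := by
        rw [← Finset.sum_neg_distrib]
    _ = -(∑ j ∈ Finset.range (n+1), Gz p q n θ k j) + Gz p q n θ k 0 := by
        have h2 := Finset.sum_range_succ' (Gz p q n θ k) (n+1)
        have h3 := Finset.sum_range_succ (Gz p q n θ k) (n+1)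
        have h4 : Gz p q n θ k (n+1) = 0 := by
          rw [Gz, Nat.add_sub_cancel, cc, hqn]
          simp
        rw [h3, h4, add_zero] at h2
        rw [h2]
        ring

lemma key_id (p q : Polynomial ℂ) (n : ℕ) (θ : ℂ)
    (hq : p = (X - Polynomial.C θ) * q) (hqn : derivative^[n] q = 0) (k : ℤ) :
    (X - Polynomial.C θ) * Bz p q n θ k = Az p n θ k + p * Bz p q n θ (k-1) := by
  rw [Az_eq, hpB p q n θ k hqn, Bz, Finset.mul_sum]
  rw [Finset.sum_range_succ' (fun j => (X - Polynomial.C θ) * Tz p q n θ k j) n,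
      Finset.sum_range_succ' (Tz p p n θ k) n,
      Finset.sum_range_succ' (Gz p q n θ k) n]
  have hj : ∀ j ∈ Finset.range n,
      (X - Polynomial.C θ) * Tz p q n θ k (j+1) = Tz p p n θ k (j+1) - Gz p q n θ k (j+1) := by
    intro j _
    have hL := Leibniz_cc q θ j
    rw [← hq] at hL
    rw [Tz, Tz, Gz, Nat.add_sub_cancel, hL]
    ring
  rw [Finset.sum_congr rfl hj, Finset.sum_sub_distrib]
  have h0 : (X - Polynomial.C θ) * Tz p q n θ k 0 = Tz p p n θ k 0 := by
    rw [Tz, Tz, cc_zero, cc_zero, hq]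
    ring
  rw [← h0]
  have h0' : Gz p q n θ k 0 = Tz p q n θ k 0 := by
    rw [Gz, Tz]
  rw [h0']
  ring

lemma Bz_zero_eq (p q : Polynomial ℂ) (n : ℕ) (θ : ℂ) :
    Bz p q n θ 0 = q * (X - Polynomial.C θ) := by
  rw [Bz, Finset.sum_eq_single_of_mem 0 (Finset.mem_range.mpr (by omega))]
  · simp [Tz, cc_zero, Rz_zero]
  · intro j hj hne
    rw [Tz, Rz_neg p n θ (by omega : (0:ℤ) - j < 0), mul_zero]

lemma Bz_eq_zero (p q : Polynomial ℂ) {n : ℕ} (hn : 1 ≤ n) (θ : ℂ)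
    (hq : p = (X - Polynomial.C θ) * q) (hqn : derivative^[n] q = 0) :
    ∀ k : ℤ, 1 ≤ k → Bz p q n θ k = 0 := by
  have hX : (X - Polynomial.C θ : Polynomial ℂ) ≠ 0 := Polynomial.X_sub_C_ne_zero θ
  refine Int.le_induction ?_ ?_
  · have h := key_id p q n θ hq hqn 1
    rw [show (1:ℤ) - 1 = 0 by ring, Bz_zero_eq, Az_one p hn θ] at h
    have h2 : (X - Polynomial.C θ) * Bz p q n θ 1 = 0 := by
      rw [h, hq]; ring
    rcases mul_eq_zero.mp h2 with h3 | h3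
    · exact absurd h3 hX
    · exact h3
  · intro k hk ih
    have h := key_id p q n θ hq hqn (k+1)
    rw [show k+1-1 = k by ring, ih, Az_eq_zero p n hn θ (by omega), mul_zero, add_zero] at h
    rcases mul_eq_zero.mp h with h3 | h3
    · exact absurd h3 hX
    · exact h3

lemma Rz_dvd (p q : Polynomial ℂ) {n : ℕ} (hn : 1 ≤ n) (θ : ℂ)
    (hq : p = (X - Polynomial.C θ) * q) (hqn : derivative^[n] q = 0)
    (hq0 : q.eval θ ≠ 0) :
    ∀ k : ℕ, (X - Polynomial.C θ)^(k+1) ∣ Rz p n θ (k : ℤ) := by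
  intro k
  induction k using Nat.strong_induction_on with
  | _ k IH =>
    rcases Nat.eq_zero_or_pos k with rfl | hk
    · simp [Rz_zero]
    · have hB := Bz_eq_zero p q hn θ hq hqn (k:ℤ) (by exact_mod_cast hk)
      rw [Bz, Finset.sum_range_succ' (Tz p q n θ k) n] at hB
      have h0 : Tz p q n θ (k:ℤ) 0 = q * Rz p n θ (k:ℤ) := by
        rw [Tz, cc_zero]
        simp
      rw [h0] at hB
      have hqR : q * Rz p n θ (k:ℤ) = -∑ j ∈ Finset.range n, Tz p q n θ (k:ℤ) (j+1) := by
        linear_combination hB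
      have hdvd : (X - Polynomial.C θ)^(k+1) ∣ q * Rz p n θ (k:ℤ) := by
        rw [hqR, dvd_neg]
        apply Finset.dvd_sum
        intro j hj
        by_cases hjk : (j:ℤ) + 1 ≤ k
        · obtain ⟨k', hk'1, hk'2⟩ : ∃ k' : ℕ, ((k:ℤ) - ((j+1:ℕ):ℤ) = (k':ℤ)) ∧ k' < k := by
            refine ⟨k - (j+1), by push_cast; omega, by omega⟩
          rw [Tz, hk'1]
          have hdvd1 : (X - Polynomial.C θ)^(j+1) ∣ p^(j+1) :=
            pow_dvd_pow_of_dvd ⟨q, hq⟩ _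
          have hdvd2 := IH k' hk'2
          have hsplit : (X - Polynomial.C θ)^(k+1)
              = (X - Polynomial.C θ)^(j+1) * (X - Polynomial.C θ)^(k'+1) := by
            rw [← pow_add]
            congr 1
            omega
          rw [hsplit]
          exact dvd_trans (mul_dvd_mul hdvd1 hdvd2)
            ⟨(-1)^(j+1) * cc q (j+1), by ring⟩
        · rw [Tz, Rz_neg p n θ (by push_cast; omega), mul_zero]
          exact dvd_zero _
      exact (Polynomial.prime_X_sub_C θ).pow_dvd_of_dvd_mul_left (k+1)
        (fun hcon => hq0 (Polynomial.dvd_iff_isRoot.mp hcon)) hdvd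

lemma D_eq_Epz (p : Polynomial ℂ) (n : ℕ) (D : ℤ → ℂ → ℂ)
    (hD0 : ∀ z : ℂ, D 0 z = 1)
    (hDneg : ∀ k : ℤ, k < 0 → ∀ z : ℂ, D k z = 0)
    (hDrec : ∀ m' : ℤ, 1 ≤ m' → ∀ z : ℂ, D m' z =
      ∑ i ∈ Finset.Icc 1 n, (-1 : ℂ) ^ (i - 1) * (p.eval z) ^ (i - 1) *
        (((Polynomial.derivative^[i] p).eval z) / (Nat.factorial i)) * D (m' - i) z) :
    ∀ k : ℕ, ∀ z : ℂ, D (k:ℤ) z = (Epz p n (k:ℤ)).eval z := by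
  intro k
  induction k using Nat.strong_induction_on with
  | _ k IH =>
    intro z
    rcases Nat.eq_zero_or_pos k with rfl | hk
    · simp [hD0, Epz_zero]
    · rw [hDrec k (by exact_mod_cast hk) z, Epz_rec p n (by exact_mod_cast hk),
        Polynomial.eval_finset_sum]
      refine Finset.sum_congr rfl fun i hi => ?_
      have h1i : 1 ≤ i := (Finset.mem_Icc.mp hi).1
      rw [Polynomial.eval_mul, Polynomial.eval_mul, Polynomial.eval_mul,
        Polynomial.eval_pow, Polynomial.eval_pow, Polynomial.eval_neg, Polynomial.eval_one]
      have hcc : (cc p i).eval z = ((Polynomial.derivative^[i] p).eval z) / (Nat.factorial i) := by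
        rw [cc, Polynomial.eval_mul, Polynomial.eval_C, div_eq_mul_inv]
      rw [hcc]
      congr 1
      by_cases hik : (i:ℤ) ≤ (k:ℤ)
      · obtain ⟨k', h1, h2⟩ : ∃ k' : ℕ, ((k:ℤ) - i = (k':ℤ)) ∧ k' < k :=
          ⟨k - i, by omega, by omega⟩
        rw [h1, IH k' h2 z]
      · rw [hDneg _ (by omega) z, Epz_neg p n (by omega), Polynomial.eval_zero]

lemma Epz_eval_theta (p : Polynomial ℂ) {n : ℕ} (hn : 1 ≤ n) (θ : ℂ) (hθ : p.eval θ = 0) :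
    ∀ k : ℕ, (Epz p n (k:ℤ)).eval θ = ((derivative p).eval θ)^k := by
  intro k
  induction k with
  | zero => simp [Epz_zero]
  | succ k ih =>
    rw [show ((k+1:ℕ):ℤ) = (k:ℤ)+1 by push_cast; ring,
      Epz_rec p n (by omega), Polynomial.eval_finset_sum,
      Finset.sum_eq_single_of_mem 1 (Finset.mem_Icc.mpr ⟨le_rfl, hn⟩)]
    · rw [show (k:ℤ)+1-((1:ℕ):ℤ) = (k:ℤ) by push_cast; ring]
      rw [cc_one]
      simp [ih, pow_succ, mul_comm]
    · intro i hi hne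
      have h1i : 1 ≤ i := (Finset.mem_Icc.mp hi).1
      rw [Polynomial.eval_mul, Polynomial.eval_mul, Polynomial.eval_mul,
        Polynomial.eval_pow, Polynomial.eval_pow, hθ, zero_pow (by omega : i - 1 ≠ 0)]
      ring

/-- Local convergence of order `m` of the basic family member `B_m` at a
simple root `θ` of `p`: there are `δ > 0` and `C > 0` such that for all `z` with
`|z - θ| < δ`, `D_{m-1}(z) ≠ 0` and `|B_m(z) - θ| ≤ C·|z - θ|^m`. -/
theorem basic_family_local_order_m_convergence
    (p : Polynomial ℂ) (n : ℕ) (hn : 1 ≤ n) (hdeg : p.natDegree = n)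
    (m : ℕ) (hm : 2 ≤ m)
    (D : ℤ → ℂ → ℂ)
    (hD0 : ∀ z : ℂ, D 0 z = 1)
    (hDneg : ∀ k : ℤ, k < 0 → ∀ z : ℂ, D k z = 0)
    (hDrec : ∀ m' : ℤ, 1 ≤ m' → ∀ z : ℂ, D m' z =
      ∑ i ∈ Finset.Icc 1 n, (-1 : ℂ) ^ (i - 1) * (p.eval z) ^ (i - 1) *
        (((Polynomial.derivative^[i] p).eval z) / (Nat.factorial i)) * D (m' - i) z)
    (θ : ℂ) (hθ : p.eval θ = 0) (hθ' : p.derivative.eval θ ≠ 0) :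
    ∃ δ > (0 : ℝ), ∃ C > (0 : ℝ), ∀ z : ℂ, ‖z - θ‖ < δ →
      D ((m : ℤ) - 1) z ≠ 0 ∧
      ‖(z - p.eval z * D ((m : ℤ) - 2) z / D ((m : ℤ) - 1) z) - θ‖ ≤
        C * ‖z - θ‖ ^ m := by
  obtain ⟨q, hq⟩ : (X - Polynomial.C θ) ∣ p := Polynomial.dvd_iff_isRoot.mpr hθ
  have hp0 : p ≠ 0 := fun h => by rw [h] at hdeg; simp at hdeg; omega
  have hq0 : q ≠ 0 := fun h => hp0 (by rw [hq, h, mul_zero])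
  have hqθ : q.eval θ = p.derivative.eval θ := by
    have hder : derivative p = (X - Polynomial.C θ) * derivative q + q := by
      rw [hq, derivative_mul]
      simp
      ring
    rw [hder, Polynomial.eval_add, Polynomial.eval_mul]
    simp
  have hqθne : q.eval θ ≠ 0 := by rw [hqθ]; exact hθ'
  have hqdeg : q.natDegree = n - 1 := by
    have h1 : p.natDegree = (X - Polynomial.C θ).natDegree + q.natDegree := by
      rw [hq, Polynomial.natDegree_mul (Polynomial.X_sub_C_ne_zero θ) hq0]
    rw [Polynomial.natDegree_X_sub_C] at h1
    omega
  have hqn : Polynomial.derivative^[n] q = 0 :=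
    Polynomial.iterate_derivative_eq_zero (by rw [hqdeg]; omega)
  obtain ⟨H, hH⟩ := Rz_dvd p q hn θ hq hqn hqθne (m-1)
  rw [show (m-1)+1 = m by omega, show (((m-1:ℕ)):ℤ) = (m:ℤ)-1 by omega] at hH
  -- D in terms of Epz
  have hDE := D_eq_Epz p n D hD0 hDneg hDrec
  have hD1 : ∀ z : ℂ, D ((m:ℤ)-1) z = (Epz p n ((m:ℤ)-1)).eval z := by
    intro z
    rw [show (m:ℤ)-1 = ((m-1:ℕ):ℤ) by omega]
    exact hDE (m-1) z
  have hD2 : ∀ z : ℂ, D ((m:ℤ)-2) z = (Epz p n ((m:ℤ)-2)).eval z := by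
    intro z
    rw [show (m:ℤ)-2 = ((m-2:ℕ):ℤ) by omega]
    exact hDE (m-2) z
  -- value at θ
  have hfθ : (Epz p n ((m:ℤ)-1)).eval θ = (p.derivative.eval θ)^(m-1) := by
    rw [show (m:ℤ)-1 = ((m-1:ℕ):ℤ) by omega]
    exact Epz_eval_theta p hn θ hθ (m-1)
  have hfθne : (Epz p n ((m:ℤ)-1)).eval θ ≠ 0 := by
    rw [hfθ]; exact pow_ne_zero _ hθ'
  set fθ := (Epz p n ((m:ℤ)-1)).eval θ with hfθdef
  have hfθpos : 0 < ‖fθ‖ := norm_pos_iff.mpr hfθne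
  -- continuity
  have hc1 : ContinuousAt (fun z => (Epz p n ((m:ℤ)-1)).eval z) θ :=
    (Polynomial.continuous _).continuousAt
  obtain ⟨δ₁, hδ₁pos, hδ₁⟩ := Metric.continuousAt_iff.mp hc1 (‖fθ‖ / 2)
    (half_pos hfθpos)
  have hc2 : ContinuousAt (fun z => H.eval z) θ := (Polynomial.continuous _).continuousAt
  obtain ⟨δ₂, hδ₂pos, hδ₂⟩ := Metric.continuousAt_iff.mp hc2 1 one_pos
  refine ⟨min δ₁ δ₂, lt_min hδ₁pos hδ₂pos,
    (‖H.eval θ‖ + 1) / (‖fθ‖ / 2),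
    div_pos (by positivity) (half_pos hfθpos), ?_⟩
  intro z hz
  have hz1 : dist z θ < δ₁ := by rw [Complex.dist_eq]; exact hz.trans_le (min_le_left _ _)
  have hz2 : dist z θ < δ₂ := by rw [Complex.dist_eq]; exact hz.trans_le (min_le_right _ _)
  have hE1 : ‖fθ‖ / 2 ≤ ‖(Epz p n ((m:ℤ)-1)).eval z‖ := by
    have h1 := hδ₁ hz1
    rw [Complex.dist_eq] at h1
    have h2 := norm_sub_norm_le fθ (fθ - (Epz p n ((m:ℤ)-1)).eval z)
    simp only [sub_sub_cancel] at h2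
    have h3 : ‖fθ - (Epz p n ((m:ℤ)-1)).eval z‖
        = ‖(Epz p n ((m:ℤ)-1)).eval z - fθ‖ := norm_sub_rev _ _
    linarith
  have hE1ne : (Epz p n ((m:ℤ)-1)).eval z ≠ 0 := by
    intro h
    rw [h] at hE1
    simp at hE1
    linarith
  have hDne : D ((m:ℤ)-1) z ≠ 0 := by rw [hD1 z]; exact hE1ne
  refine ⟨hDne, ?_⟩
  have hHb : ‖H.eval z‖ ≤ ‖H.eval θ‖ + 1 := by
    have h1 := hδ₂ hz2
    rw [Complex.dist_eq] at h1
    have h2 := norm_sub_norm_le (H.eval z) (H.eval z - H.eval θ)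
    simp only [sub_sub_cancel] at h2
    linarith
  have hkey : (z - p.eval z * D ((m:ℤ)-2) z / D ((m:ℤ)-1) z) - θ
      = ((Rz p n θ ((m:ℤ)-1)).eval z) / ((Epz p n ((m:ℤ)-1)).eval z) := by
    rw [hD1 z, hD2 z, Rz, show (m:ℤ)-1-1 = (m:ℤ)-2 by ring]
    rw [Polynomial.eval_sub, Polynomial.eval_mul, Polynomial.eval_mul,
      Polynomial.eval_sub, Polynomial.eval_X, Polynomial.eval_C]
    field_simp
    ring
  rw [hkey, norm_div, hH, Polynomial.eval_mul, Polynomial.eval_pow,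
    Polynomial.eval_sub, Polynomial.eval_X, Polynomial.eval_C, norm_mul, norm_pow]
  calc ‖z - θ‖ ^ m * ‖H.eval z‖
        / ‖(Epz p n ((m:ℤ)-1)).eval z‖
      ≤ ‖z - θ‖ ^ m * (‖H.eval θ‖ + 1) / (‖fθ‖ / 2) := by
        apply div_le_div₀ (by positivity) ?_ (half_pos hfθpos) hE1
        exact mul_le_mul_of_nonneg_left hHb (by positivity)
    _ = (‖H.eval θ‖ + 1) / (‖fθ‖ / 2) * ‖z - θ‖ ^ m := by
        ring
end
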